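/- arXiv:0807.1719 — 9 statements merged into one kernel-verified Lean document; each statement's English description precedes it below -/
import Mathlib

section
/- With K = k((u)) and ŌÜ as above, let D(d, n, a) be the ŌÜ-module with basis e_0, ..., e_{d-1}, ŌÜ(e_i) = e_{i+1} for i < d‚ąí1 and ŌÜ(e_{d-1}) = a u^n e_0 (a ‚ąą k*, n ‚Č• 0). If there exist s ‚Č• 0 and m ‚ąą ‚Ą§ with n ‚ąí b^s n' = m(b^d ‚ąí 1) and a = Ōɗ(a'), then D(d, n, a) ‚ČÖ D(d, n', a') as ŌÜ-modules, via e_i ‚Ü¶ u^{b^i m} e'_{i+s} where e'_{j+1} = ŌÜ(e'_j) for j ‚Č• d. -/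
/-- The φ-semilinear operator of the φ-module `D(d, n, a)` over `K = k((u))`,
expressed in coordinates with respect to the basis `e_0, …, e_{d-1}`:
`φ(e_i) = e_{i+1}` for `i < d-1` and `φ(e_{d-1}) = a uⁿ e_0`. -/
noncomputable def Dphi {k : Type*} [Field k]
    (φ : LaurentSeries k →+* LaurentSeries k) (d n : ℕ) (a : k)
    (x : Fin d → LaurentSeries k) : Fin d → LaurentSeries k :=
  fun j =>
    if (j : ℕ) = 0 then
      HahnSeries.single (n : ℤ) a * φ (x ⟨d - 1, by have := j.isLt; omega⟩)
    else
      φ (x ⟨(j : ℕ) - 1, by have := j.isLt; omega⟩)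

private lemma phi_single {k : Type*} [Field k] (σ : k ≃+* k) (b : ℕ) (hb : 1 < b)
    (φ : LaurentSeries k →+* LaurentSeries k)
    (hφ1 : ∀ (f : LaurentSeries k) (m : ℤ), (φ f).coeff ((b : ℤ) * m) = σ (f.coeff m))
    (hφ2 : ∀ (f : LaurentSeries k) (m : ℤ), ¬ ((b : ℤ) ∣ m) → (φ f).coeff m = 0)
    (M : ℤ) (α : k) :
    φ (HahnSeries.single M α) = HahnSeries.single ((b : ℤ) * M) (σ α) := by
  have hb0 : (b : ℤ) ≠ 0 := by positivity
  ext z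
  by_cases hz : (b : ℤ) ∣ z
  · obtain ⟨c, rfl⟩ := hz
    rw [hφ1]
    rcases eq_or_ne c M with rfl | hc
    · simp
    · rw [HahnSeries.coeff_single_of_ne hc, map_zero,
        HahnSeries.coeff_single_of_ne (by exact fun h => hc (mul_left_cancel₀ hb0 h))]
  · rw [hφ2 _ _ hz, HahnSeries.coeff_single_of_ne (by rintro rfl; exact hz ⟨M, rfl⟩)]

set_option maxHeartbeats 4000000 in
/-- If `n ≡ bˢ n' (mod b^d - 1)` and `a = σˢ(a')`, then `D(d,n,a) ≅ D(d,n',a')`. -/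
theorem stmt5 (k : Type*) [Field k] (σ : k ≃+* k) (b : ℕ) (hb : 1 < b)
    (φ : LaurentSeries k →+* LaurentSeries k)
    (hφ1 : ∀ (f : LaurentSeries k) (m : ℤ), (φ f).coeff ((b : ℤ) * m) = σ (f.coeff m))
    (hφ2 : ∀ (f : LaurentSeries k) (m : ℤ), ¬ ((b : ℤ) ∣ m) → (φ f).coeff m = 0)
    (d : ℕ) (hd : 0 < d) (n n' : ℕ) (a a' : k) (ha : a ≠ 0) (ha' : a' ≠ 0)
    (s : ℕ) (m : ℤ)
    (hcong : (n : ℤ) - (b : ℤ) ^ s * (n' : ℤ) = m * ((b : ℤ) ^ d - 1))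
    (haa' : a = (σ ^ s) a') :
    ∃ F : (Fin d → LaurentSeries k) ≃ₗ[LaurentSeries k] (Fin d → LaurentSeries k),
      ∀ x, F (Dphi φ d n a x) = Dphi φ d n' a' (F x) := by
  set t := s % d with ht
  set q := s / d with hq
  have htd : t < d := Nat.mod_lt _ hd
  have hts : s = d * q + t := (Nat.div_add_mod s d).symm
  -- exponent bookkeeping
  set S : ℤ := ∑ j ∈ Finset.range q, ((b : ℤ) ^ d) ^ j with hS
  set m' : ℤ := m + (b : ℤ) ^ t * S * n' with hm'
  have hgeom : S * ((b : ℤ) ^ d - 1) = (b : ℤ) ^ (d * q) - 1 := by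
    rw [hS, geom_sum_mul, ← pow_mul]
  have hbs : (b : ℤ) ^ s = (b : ℤ) ^ t * (b : ℤ) ^ (d * q) := by
    rw [hts, pow_add, mul_comm]
  have hkey : (n : ℤ) + m' = (b : ℤ) ^ t * n' + (b : ℤ) ^ d * m' := by
    rw [hm']
    linear_combination hcong - (b : ℤ) ^ t * (n' : ℤ) * hgeom + (n' : ℤ) * hbs
  -- coefficient bookkeeping
  set α0 : k := ∏ j ∈ Finset.range q, (σ ^ (d * j + t)) a' with hα0
  have hα0ne : α0 ≠ 0 := Finset.prod_ne_zero_iff.mpr (fun j _ => (map_ne_zero _).mpr ha')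
  have hpowapp : ∀ (u v : ℕ) (x : k), (σ ^ (u + v)) x = (σ ^ u) ((σ ^ v) x) := by
    intro u v x; rw [pow_add]; rfl
  have hpow1 : ∀ (v : ℕ) (x : k), σ ((σ ^ v) x) = (σ ^ (1 + v)) x := by
    intro v x; rw [hpowapp, pow_one]
  have hkeyc : (σ ^ d) α0 * (σ ^ t) a' = α0 * a := by
    rw [haa', hts, hα0]
    rw [map_prod]
    have h1 : (∏ j ∈ Finset.range q, (σ ^ d) ((σ ^ (d * j + t)) a')) * (σ ^ t) a'
        = ∏ j ∈ Finset.range (q + 1), (σ ^ (d * j + t)) a' := by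
      rw [Finset.prod_range_succ']
      congr 1
      · exact Finset.prod_congr rfl fun j _ => by
          rw [← hpowapp]; congr 2; ring
      · congr 2; ring
    rw [h1, Finset.prod_range_succ]
  -- the scalars
  set Mi : ℕ → ℤ := fun i => (b : ℤ) ^ i * m' +
      (if d - t ≤ i then (b : ℤ) ^ (i - (d - t)) * (n' : ℤ) else 0) with hMi
  set αi : ℕ → k := fun i => (σ ^ i) α0 *
      (if d - t ≤ i then (σ ^ (i - (d - t))) a' else 1) with hαi
  set μ : ℕ → LaurentSeries k := fun i => HahnSeries.single (Mi i) (αi i) with hμ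
  have hαne : ∀ i, αi i ≠ 0 := by
    intro i
    simp only [hαi]
    refine mul_ne_zero ((map_ne_zero _).mpr hα0ne) ?_
    split
    · exact (map_ne_zero _).mpr ha'
    · exact one_ne_zero
  have hμne : ∀ i, μ i ≠ 0 := fun i => HahnSeries.single_ne_zero (hαne i)
  have hps := phi_single σ b hb φ hφ1 hφ2
  -- relation 1
  have hrel1 : ∀ i, 1 ≤ i → i < d → i ≠ d - t → μ i = φ (μ (i - 1)) := by
    intro i h1 h2 h3
    obtain ⟨i', rfl⟩ : ∃ i', i = i' + 1 := ⟨i - 1, by omega⟩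
    simp only [hμ, hps, Nat.add_sub_cancel]
    have hM : Mi (i' + 1) = (b : ℤ) * Mi i' := by
      simp only [hMi]
      by_cases h : d - t ≤ i' + 1
      · have h' : d - t ≤ i' := by omega
        rw [if_pos h, if_pos h', show i' + 1 - (d - t) = (i' - (d - t)) + 1 from by omega,
          pow_succ, pow_succ]
        ring
      · rw [if_neg h, if_neg (by omega), pow_succ]; ring
    have hα : αi (i' + 1) = σ (αi i') := by
      simp only [hαi]
      by_cases h : d - t ≤ i' + 1
      · have h' : d - t ≤ i' := by omega
        rw [if_pos h, if_pos h', show i' + 1 - (d - t) = (i' - (d - t)) + 1 from by omega,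
          show (i' - (d - t)) + 1 = 1 + (i' - (d - t)) from by omega,
          show i' + 1 = 1 + i' from by omega, hpowapp, hpowapp, pow_one, map_mul]
      · rw [if_neg h, if_neg (by omega), mul_one, mul_one,
          show i' + 1 = 1 + i' from by omega, hpowapp, pow_one]
    rw [hM, hα]
  -- relation 2
  have hrel2 : t ≠ 0 → μ (d - t) = HahnSeries.single (n' : ℤ) a' * φ (μ (d - t - 1)) := by
    intro htne
    obtain ⟨e, he⟩ : ∃ e, d - t = e + 1 := ⟨d - t - 1, by omega⟩
    rw [he, Nat.add_sub_cancel]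
    simp only [hμ, hps, HahnSeries.single_mul_single]
    have hM : Mi (e + 1) = (n' : ℤ) + (b : ℤ) * Mi e := by
      simp only [hMi, he]
      rw [if_pos le_rfl, if_neg (by omega), Nat.sub_self, pow_zero, pow_succ]
      ring
    have hα : αi (e + 1) = a' * σ (αi e) := by
      simp only [hαi, he]
      rw [if_pos le_rfl, if_neg (by omega), Nat.sub_self,
        show ((σ ^ (0 : ℕ)) a') = a' from rfl, mul_one,
        show e + 1 = 1 + e from by omega, hpowapp, pow_one]
      ring
    rw [hM, hα]
  -- relation 3
  have hrel3 : HahnSeries.single (n : ℤ) a * μ 0 =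
      (if t = 0 then HahnSeries.single (n' : ℤ) a' * φ (μ (d - 1)) else φ (μ (d - 1))) := by
    have hMi0 : Mi 0 = m' := by
      simp only [hMi]; rw [if_neg (by omega)]; ring
    have hαi0 : αi 0 = α0 := by
      simp only [hαi]; rw [if_neg (by omega), mul_one, pow_zero]; rfl
    by_cases htz : t = 0
    · rw [if_pos htz]
      simp only [hμ, hps, HahnSeries.single_mul_single, hMi0, hαi0]
      have hM : Mi (d - 1) = (b : ℤ) ^ (d - 1) * m' := by
        simp only [hMi]; rw [if_neg (by omega)]; ring
      have hα : αi (d - 1) = (σ ^ (d - 1)) α0 := by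
        simp only [hαi]; rw [if_neg (by omega), mul_one]
      rw [hM, hα]
      have hE : (n : ℤ) + m' = (n' : ℤ) + (b : ℤ) * ((b : ℤ) ^ (d - 1) * m') := by
        have hp : (b : ℤ) * ((b : ℤ) ^ (d - 1) * m') = (b : ℤ) ^ d * m' := by
          rw [← mul_assoc, ← pow_succ', show d - 1 + 1 = d from by omega]
        rw [hp]
        have h2 := hkey
        rw [htz, pow_zero, one_mul] at h2
        linarith
      have hC : a * α0 = a' * σ ((σ ^ (d - 1)) α0) := by
        have hp : σ ((σ ^ (d - 1)) α0) = (σ ^ d) α0 := by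
          rw [hpow1, show 1 + (d - 1) = d from by omega]
        rw [hp]
        have h2 : (σ ^ d) α0 * a' = α0 * a := by
          have h := hkeyc
          rw [htz] at h
          simpa using h
        rw [mul_comm a α0, ← h2]
        ring
      rw [hE, hC]
    · rw [if_neg htz]
      simp only [hμ, hps, HahnSeries.single_mul_single, hMi0, hαi0]
      have hM : Mi (d - 1) = (b : ℤ) ^ (d - 1) * m' + (b : ℤ) ^ (t - 1) * n' := by
        simp only [hMi]; rw [if_pos (by omega), show d - 1 - (d - t) = t - 1 from by omega]
      have hα : αi (d - 1) = (σ ^ (d - 1)) α0 * (σ ^ (t - 1)) a' := by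
        simp only [hαi]; rw [if_pos (by omega), show d - 1 - (d - t) = t - 1 from by omega]
      rw [hM, hα]
      have hE : (n : ℤ) + m' =
          (b : ℤ) * ((b : ℤ) ^ (d - 1) * m' + (b : ℤ) ^ (t - 1) * n') := by
        have hp : (b : ℤ) * ((b : ℤ) ^ (d - 1) * m' + (b : ℤ) ^ (t - 1) * n')
            = (b : ℤ) ^ d * m' + (b : ℤ) ^ t * n' := by
          rw [mul_add, ← mul_assoc, ← mul_assoc, ← pow_succ', ← pow_succ',
            show d - 1 + 1 = d from by omega, show t - 1 + 1 = t from by omega]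
        rw [hp]; linarith [hkey]
      have hC : a * α0 = σ ((σ ^ (d - 1)) α0 * (σ ^ (t - 1)) a') := by
        have hp : σ ((σ ^ (d - 1)) α0 * (σ ^ (t - 1)) a') = (σ ^ d) α0 * (σ ^ t) a' := by
          rw [map_mul, hpow1, hpow1,
            show 1 + (d - 1) = d from by omega, show 1 + (t - 1) = t from by omega]
        rw [hp, hkeyc]; ring
      rw [hE, hC]
  -- the permutations
  set τ : Fin d → Fin d := fun j =>
    if h : (j : ℕ) < t then ⟨(j : ℕ) + (d - t), by omega⟩
    else ⟨(j : ℕ) - t, by have := j.isLt; omega⟩ with hτ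
  set π : Fin d → Fin d := fun i =>
    if h : (i : ℕ) + t < d then ⟨(i : ℕ) + t, h⟩
    else ⟨(i : ℕ) + t - d, by have := i.isLt; omega⟩ with hπ
  have hτval : ∀ j : Fin d, ((τ j : Fin d) : ℕ) =
      if (j : ℕ) < t then (j : ℕ) + (d - t) else (j : ℕ) - t := by
    intro j; simp only [hτ]; split <;> rfl
  have hπval : ∀ i : Fin d, ((π i : Fin d) : ℕ) =
      if (i : ℕ) + t < d then (i : ℕ) + t else (i : ℕ) + t - d := by
    intro i; simp only [hπ]; split <;> rfl
  have hπτ : ∀ j, π (τ j) = j := by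
    intro j
    have hj := j.isLt
    apply Fin.ext
    rw [hπval, hτval]
    split_ifs <;> omega
  have hτπ : ∀ i, τ (π i) = i := by
    intro i
    have hi := i.isLt
    apply Fin.ext
    rw [hτval, hπval]
    split_ifs <;> omega
  -- evaluation lemmas for Dphi
  have hDzero : ∀ (N : ℕ) (c : k) (y : Fin d → LaurentSeries k) (j : Fin d), (j : ℕ) = 0 →
      Dphi φ d N c y j = HahnSeries.single (N : ℤ) c * φ (y ⟨d - 1, by omega⟩) := by
    intro N c y j hj
    simp only [Dphi]
    rw [if_pos hj]
  have hDsucc : ∀ (N : ℕ) (c : k) (y : Fin d → LaurentSeries k) (j : Fin d) (i : ℕ)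
      (hi : i < d), i + 1 = (j : ℕ) → Dphi φ d N c y j = φ (y ⟨i, hi⟩) := by
    intro N c y j i hi hij
    simp only [Dphi]
    rw [if_neg (by omega)]
    congr 1
    apply congrArg
    apply Fin.ext
    simp only [Fin.val_mk]
    omega
  -- the linear maps
  refine ⟨LinearEquiv.ofLinear
    { toFun := fun x j => μ (τ j) * x (τ j)
      map_add' := by intro x y; funext j; simp [mul_add]
      map_smul' := by
        intro c x; funext j
        simp only [Pi.smul_apply, smul_eq_mul, RingHom.id_apply]
        ring }
    { toFun := fun x i => (μ i)⁻¹ * x (π i)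
      map_add' := by intro x y; funext i; simp [mul_add]
      map_smul' := by
        intro c x; funext i
        simp only [Pi.smul_apply, smul_eq_mul, RingHom.id_apply]
        ring } ?_ ?_, ?_⟩
  · apply LinearMap.ext; intro x; funext j
    simp only [LinearMap.comp_apply, LinearMap.coe_mk, AddHom.coe_mk, LinearMap.id_apply]
    rw [hπτ, ← mul_assoc, mul_inv_cancel₀ (hμne _), one_mul]
  · apply LinearMap.ext; intro x; funext i
    simp only [LinearMap.comp_apply, LinearMap.coe_mk, AddHom.coe_mk, LinearMap.id_apply]
    rw [hτπ, ← mul_assoc, inv_mul_cancel₀ (hμne _), one_mul]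
  · intro x
    funext j
    simp only [LinearEquiv.ofLinear_apply, LinearMap.coe_mk, AddHom.coe_mk]
    have hj := j.isLt
    by_cases hj0 : (j : ℕ) = 0
    · -- j = 0
      rw [hDzero n' a' _ j hj0]
      by_cases htz : t = 0
      · -- τ 0 = 0
        have hτ0n : ((τ j : Fin d) : ℕ) = 0 := by rw [hτval]; split <;> omega
        have hτd1 : τ ⟨d - 1, by omega⟩ = ⟨d - 1, by omega⟩ := by
          apply Fin.ext; rw [hτval]; simp only [Fin.val_mk]; split <;> omega
        rw [hDzero n a x (τ j) hτ0n, hτ0n, hτd1, map_mul]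
        simp only [Fin.val_mk]
        have h3 := hrel3
        rw [if_pos htz] at h3
        calc μ 0 * (HahnSeries.single (n : ℤ) a * φ (x ⟨d - 1, by omega⟩))
            = (HahnSeries.single (n : ℤ) a * μ 0) * φ (x ⟨d - 1, by omega⟩) := by ring
          _ = HahnSeries.single (n' : ℤ) a' *
              (φ (μ (d - 1)) * φ (x ⟨d - 1, by omega⟩)) := by rw [h3]; ring
      · -- τ 0 = d - t ≠ 0
        have hτ0n : ((τ j : Fin d) : ℕ) = d - t := by rw [hτval]; split <;> omega
        have hτd1 : τ ⟨d - 1, by omega⟩ = ⟨d - t - 1, by omega⟩ := by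
          apply Fin.ext; rw [hτval]; simp only [Fin.val_mk]; split <;> omega
        have hlt : d - t - 1 < d := by omega
        have heq : d - t - 1 + 1 = ((τ j : Fin d) : ℕ) := by rw [hτ0n]; omega
        rw [hDsucc n a x (τ j) (d - t - 1) hlt heq, hτ0n, hτd1, map_mul]
        simp only [Fin.val_mk]
        rw [hrel2 htz]; ring
    · -- j ≠ 0
      have hlt0 : (j : ℕ) - 1 < d := by omega
      have heq0 : (j : ℕ) - 1 + 1 = (j : ℕ) := by omega
      rw [hDsucc n' a' _ j ((j : ℕ) - 1) hlt0 heq0]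
      by_cases hjt : (j : ℕ) = t
      · -- τ j = 0 (with t ≠ 0)
        have htz : t ≠ 0 := by omega
        have hτ0n : ((τ j : Fin d) : ℕ) = 0 := by rw [hτval]; split <;> omega
        have hτj1 : τ ⟨(j : ℕ) - 1, hlt0⟩ = ⟨d - 1, by omega⟩ := by
          apply Fin.ext; rw [hτval]; simp only [Fin.val_mk]; split <;> omega
        rw [hDzero n a x (τ j) hτ0n, hτ0n, hτj1, map_mul]
        simp only [Fin.val_mk]
        have h3 := hrel3
        rw [if_neg htz] at h3
        calc μ 0 * (HahnSeries.single (n : ℤ) a * φ (x ⟨d - 1, by omega⟩))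
            = (HahnSeries.single (n : ℤ) a * μ 0) * φ (x ⟨d - 1, by omega⟩) := by ring
          _ = φ (μ (d - 1)) * φ (x ⟨d - 1, by omega⟩) := by rw [h3]
      · -- τ j ≠ 0
        by_cases hc : (j : ℕ) < t
        · -- τ j = j + (d - t)
          have hτn : ((τ j : Fin d) : ℕ) = (j : ℕ) + (d - t) := by
            rw [hτval, if_pos hc]
          have hτj1 : τ ⟨(j : ℕ) - 1, hlt0⟩ = ⟨(j : ℕ) + (d - t) - 1, by omega⟩ := by
            apply Fin.ext; rw [hτval]; simp only [Fin.val_mk]; split <;> omega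
          have hlt : (j : ℕ) + (d - t) - 1 < d := by omega
          have heq : (j : ℕ) + (d - t) - 1 + 1 = ((τ j : Fin d) : ℕ) := by
            rw [hτn]; omega
          rw [hDsucc n a x (τ j) ((j : ℕ) + (d - t) - 1) hlt heq, hτn, hτj1, map_mul]
          simp only [Fin.val_mk]
          have hr := hrel1 ((j : ℕ) + (d - t)) (by omega) (by omega) (by omega)
          rw [show (j : ℕ) + (d - t) - 1 = (j : ℕ) + (d - t) - 1 from rfl] at hr
          rw [hr]
        · -- τ j = j - t
          have hτn : ((τ j : Fin d) : ℕ) = (j : ℕ) - t := by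
            rw [hτval, if_neg hc]
          have hτj1 : τ ⟨(j : ℕ) - 1, hlt0⟩ = ⟨(j : ℕ) - t - 1, by omega⟩ := by
            apply Fin.ext; rw [hτval]; simp only [Fin.val_mk]; split <;> omega
          have hlt : (j : ℕ) - t - 1 < d := by omega
          have heq : (j : ℕ) - t - 1 + 1 = ((τ j : Fin d) : ℕ) := by
            rw [hτn]; omega
          rw [hDsucc n a x (τ j) ((j : ℕ) - t - 1) hlt heq, hτn, hτj1, map_mul]
          simp only [Fin.val_mk]
          have hr := hrel1 ((j : ℕ) - t) (by omega) (by omega) (by omega)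
          rw [hr]
end

section
/- Let Ōɠ= id, d = d' t with t coprime to p, r = n/(b^d ‚ąí 1) = n'/(b^{d'} ‚ąí 1). For each t-th root őĪ of a, the elements f_i(őĪ) = ő£_{s=0}^{t‚ąí1} őĪ^{t‚ąí1‚ąís} u^{‚ąír b^i (b^{s d'} ‚ąí 1)} e_{s d' + i} (0 ‚ȧ i < d') in D(d, n, a) satisfy ŌÜ(f_i(őĪ)) = f_{i+1}(őĪ) for i < d'‚ąí1 and ŌÜ(f_{d'‚ąí1}(őĪ)) = őĪ u^{n'} f_0(őĪ); hence they span a ŌÜ-submodule isomorphic to D(d', n', őĪ). -/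
/-- The element `f_i(α) = Σ_{s=0}^{t-1} α^{t-1-s} u^{-r bⁱ (b^{sd'} - 1)} e_{sd'+i}`
of `D(d,n,a)`, where `r = n/(b^d - 1) = n'/(b^{d'} - 1)`; the exponent
`r bⁱ (b^{sd'} - 1)` equals the integer `n' bⁱ (1 + b^{d'} + ⋯ + b^{(s-1)d'})`. -/
noncomputable def fvec {k : Type*} [Field k] (b d d' t n' : ℕ) (hd : 0 < d)
    (α : k) (i : ℕ) : Fin d → LaurentSeries k :=
  ∑ s ∈ Finset.range t,
    Pi.single (⟨(s * d' + i) % d, Nat.mod_lt _ hd⟩ : Fin d)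
      (HahnSeries.single
        (-((n' : ℤ) * (b : ℤ) ^ i * ∑ j ∈ Finset.range s, (b : ℤ) ^ (j * d')))
        (α ^ (t - 1 - s)))

theorem Dphi_sum' {k : Type*} [Field k]
    (φ : LaurentSeries k →+* LaurentSeries k) (d n : ℕ) (a : k)
    {ι : Type*} (S : Finset ι) (f : ι → Fin d → LaurentSeries k) :
    Dphi φ d n a (∑ s ∈ S, f s) = ∑ s ∈ S, Dphi φ d n a (f s) := by
  funext j
  simp only [Dphi, Finset.sum_apply]
  split <;> simp [map_sum, Finset.mul_sum]

theorem Dphi_smul' {k : Type*} [Field k]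
    (φ : LaurentSeries k →+* LaurentSeries k) (d n : ℕ) (a : k)
    (c : LaurentSeries k) (x : Fin d → LaurentSeries k) :
    Dphi φ d n a (c • x) = φ c • Dphi φ d n a x := by
  funext j
  simp only [Dphi, Pi.smul_apply, smul_eq_mul, map_mul]
  split <;> ring

theorem Dphi_apply_ne' {k : Type*} [Field k]
    (φ : LaurentSeries k →+* LaurentSeries k) (d n : ℕ) (a : k)
    (x : Fin d → LaurentSeries k) (j : Fin d) (hj : (j : ℕ) ≠ 0) :
    Dphi φ d n a x j = φ (x ⟨(j : ℕ) - 1, by have := j.isLt; omega⟩) := by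
  simp only [Dphi]; rw [if_neg hj]

theorem Dphi_apply_zero' {k : Type*} [Field k]
    (φ : LaurentSeries k →+* LaurentSeries k) (d n : ℕ) (a : k)
    (x : Fin d → LaurentSeries k) (j : Fin d) (hj : (j : ℕ) = 0) :
    Dphi φ d n a x j = HahnSeries.single (n : ℤ) a * φ (x ⟨d - 1, by have := j.isLt; omega⟩) := by
  simp only [Dphi]; rw [if_pos hj]

theorem Dphi_pi_single' {k : Type*} [Field k]
    (φ : LaurentSeries k →+* LaurentSeries k) (d n : ℕ) (a : k) (hd : 0 < d)
    (m : Fin d) (v : LaurentSeries k) :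
    Dphi φ d n a (Pi.single m v) =
      Pi.single (⟨((m : ℕ) + 1) % d, Nat.mod_lt _ hd⟩ : Fin d)
        ((if ((m : ℕ) + 1) % d = 0 then HahnSeries.single (n : ℤ) a else 1) * φ v) := by
  funext j
  simp only [Dphi]
  by_cases hm : (m : ℕ) + 1 < d
  · have h1 : ((m : ℕ) + 1) % d = (m : ℕ) + 1 := Nat.mod_eq_of_lt hm
    rw [if_neg (show ¬(((m : ℕ) + 1) % d = 0) by omega), one_mul]
    by_cases hj : (j : ℕ) = 0
    · rw [if_pos hj,
        Pi.single_eq_of_ne (M := fun _ => LaurentSeries k)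
          (by intro h; have := Fin.val_eq_of_eq h; simp at this; omega) v,
        Pi.single_eq_of_ne (M := fun _ => LaurentSeries k)
          (by intro h; have := Fin.val_eq_of_eq h; simp at this; omega) (φ v)]
      simp
    · rw [if_neg hj]
      by_cases he : j = (⟨((m : ℕ) + 1) % d, Nat.mod_lt _ hd⟩ : Fin d)
      · subst he
        rw [Pi.single_eq_same,
          show (⟨((m : ℕ) + 1) % d - 1, by omega⟩ : Fin d) = m from Fin.ext (by simp [h1]),
          Pi.single_eq_same]
      · rw [Pi.single_eq_of_ne he, Pi.single_eq_of_ne ?_, map_zero]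
        intro h; have := Fin.val_eq_of_eq h
        apply he; apply Fin.ext; simp at this ⊢
        have := j.isLt; omega
  · have hmd : (m : ℕ) = d - 1 := by have := m.isLt; omega
    have h1 : ((m : ℕ) + 1) % d = 0 := by
      rw [hmd, Nat.sub_add_cancel hd, Nat.mod_self]
    rw [if_pos h1]
    by_cases hj : (j : ℕ) = 0
    · rw [if_pos hj,
        show (⟨d - 1, by omega⟩ : Fin d) = m from Fin.ext hmd.symm,
        Pi.single_eq_same,
        show j = (⟨((m : ℕ) + 1) % d, Nat.mod_lt _ hd⟩ : Fin d) from
          Fin.ext (by show (j:ℕ) = ((m:ℕ)+1)%d; omega),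
        Pi.single_eq_same]
    · rw [if_neg hj,
        Pi.single_eq_of_ne (M := fun _ => LaurentSeries k)
          (by intro h; have := Fin.val_eq_of_eq h; simp at this; have := j.isLt; omega) v,
        Pi.single_eq_of_ne (M := fun _ => LaurentSeries k)
          (by intro h; have := Fin.val_eq_of_eq h; simp at this; omega) _,
        map_zero]

theorem mul_add_lt' {d d' t s i : ℕ} (hdt : d = d' * t) (hs : s < t) (hi : i < d') :
    s * d' + i < d := by
  have h1 : (s + 1) * d' ≤ t * d' := Nat.mul_le_mul_right _ hs
  have h2 : (s + 1) * d' = s * d' + d' := by ring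
  have h3 : t * d' = d := by rw [hdt]; ring
  omega

/-- With `σ = id`, `d = d' t` (`t` coprime to `p`), `n/(b^d-1) = n'/(b^{d'}-1)` and
`α` a `t`-th root of `a`, the elements `f_i(α)` satisfy `φ(f_i(α)) = f_{i+1}(α)` for
`i < d'-1` and `φ(f_{d'-1}(α)) = α u^{n'} f_0(α)`; hence they span a φ-submodule of
`D(d,n,a)` isomorphic to `D(d',n',α)`. -/
theorem stmt7 (p : ℕ) [Fact p.Prime]
    (k : Type*) [Field k] [IsAlgClosed k] [CharP k p] (b : ℕ) (hb : 1 < b)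
    (φ : LaurentSeries k →+* LaurentSeries k)
    (hφ1 : ∀ (f : LaurentSeries k) (m : ℤ), (φ f).coeff ((b : ℤ) * m) = f.coeff m)
    (hφ2 : ∀ (f : LaurentSeries k) (m : ℤ), ¬ ((b : ℤ) ∣ m) → (φ f).coeff m = 0)
    (d d' t : ℕ) (hd' : 0 < d') (ht : 0 < t) (htp : t.Coprime p)
    (hdt : d = d' * t) (hd : 0 < d)
    (n n' : ℕ)
    (hr : (n : ℤ) * ((b : ℤ) ^ d' - 1) = (n' : ℤ) * ((b : ℤ) ^ d - 1))
    (a α : k) (ha : a ≠ 0) (hα : α ^ t = a) :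
    (∀ i : ℕ, i + 1 < d' →
        Dphi φ d n a (fvec b d d' t n' hd α i) = fvec b d d' t n' hd α (i + 1)) ∧
    (Dphi φ d n a (fvec b d d' t n' hd α (d' - 1)) =
        fun j => HahnSeries.single (n' : ℤ) α * fvec b d d' t n' hd α 0 j) ∧
    ∃ F : (Fin d' → LaurentSeries k) →ₗ[LaurentSeries k] (Fin d → LaurentSeries k),
      Function.Injective F ∧
      (∀ i : Fin d', F (Pi.single i 1) = fvec b d d' t n' hd α (i : ℕ)) ∧
      (∀ x, F (Dphi φ d' n' α x) = Dphi φ d n a (F x)) := by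
  obtain ⟨t', rfl⟩ : ∃ t'', t = t'' + 1 := ⟨t - 1, by omega⟩
  obtain ⟨d'', rfl⟩ : ∃ e, d' = e + 1 := ⟨d' - 1, by omega⟩
  clear hd' ht
  -- φ of a single
  have hsingle : ∀ (m : ℤ) (c : k),
      φ (HahnSeries.single m c) = HahnSeries.single ((b:ℤ) * m) c := by
    intro m c
    ext j
    by_cases h : (b : ℤ) ∣ j
    · obtain ⟨m', rfl⟩ := h
      rw [hφ1]
      simp only [HahnSeries.coeff_single]
      have hb0 : (b:ℤ) ≠ 0 := by exact_mod_cast (by omega : b ≠ 0)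
      by_cases hm : m' = m
      · simp [hm]
      · rw [if_neg hm, if_neg (by exact fun h => hm (mul_left_cancel₀ hb0 h))]
    · rw [hφ2 _ _ h, HahnSeries.coeff_single, if_neg (by rintro rfl; exact h ⟨m, rfl⟩)]
  have hα0 : α ≠ 0 := by
    intro h
    exact ha (by rw [← hα, h, zero_pow (Nat.succ_ne_zero t')])
  -- n = n' * geometric sum
  have hb' : (1:ℤ) < (b:ℤ) := by exact_mod_cast hb
  have hx : (1:ℤ) < (b:ℤ)^(d''+1) := one_lt_pow₀ hb' (Nat.succ_ne_zero d'')
  have hgeom : (∑ j ∈ Finset.range (t'+1), (b:ℤ)^(j*(d''+1))) * ((b:ℤ)^(d''+1) - 1)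
      = (b:ℤ)^d - 1 := by
    have h := geom_sum_mul ((b:ℤ)^(d''+1)) (t'+1)
    rw [← pow_mul] at h
    rw [show ∑ j ∈ Finset.range (t'+1), (b:ℤ)^(j*(d''+1))
        = ∑ j ∈ Finset.range (t'+1), ((b:ℤ)^(d''+1))^j from
      Finset.sum_congr rfl fun j _ => by rw [← pow_mul, mul_comm], h, hdt]
  have hn : (n : ℤ) = n' * ∑ j ∈ Finset.range (t'+1), (b:ℤ)^(j*(d''+1)) :=
    mul_right_cancel₀ (sub_ne_zero.2 hx.ne') (by linear_combination hr - (n':ℤ) * hgeom)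
  have hexp : ∀ s : ℕ, (b:ℤ) * ((n':ℤ) * (b:ℤ)^d'' * ∑ j ∈ Finset.range s, (b:ℤ)^(j*(d''+1))) =
      (n':ℤ) * ∑ j ∈ Finset.range (s+1), (b:ℤ)^(j*(d''+1)) - n' := by
    intro s
    rw [Finset.sum_range_succ']
    rw [Finset.sum_congr rfl fun j (_ : j ∈ Finset.range s) =>
      show (b:ℤ)^((j+1)*(d''+1)) = (b:ℤ)^(j*(d''+1)) * (b:ℤ)^(d''+1) from by
        rw [← pow_add]; congr 1; ring]
    rw [← Finset.sum_mul]
    simp only [zero_mul, pow_zero]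
    ring
  -- part 1
  have key1 : ∀ i : ℕ, i + 1 < d''+1 →
      Dphi φ d n a (fvec b d (d''+1) (t'+1) n' hd α i)
        = fvec b d (d''+1) (t'+1) n' hd α (i + 1) := by
    intro i hi
    simp only [fvec]
    rw [Dphi_sum']
    refine Finset.sum_congr rfl fun s hs => ?_
    have hs' := Finset.mem_range.1 hs
    rw [Dphi_pi_single' φ d n a hd]
    have hsd : s * (d''+1) + i < d := mul_add_lt' hdt hs' (by omega)
    have hsd1 : s * (d''+1) + (i + 1) < d := mul_add_lt' hdt hs' hi
    have hmod : (s * (d''+1) + i) % d = s * (d''+1) + i := Nat.mod_eq_of_lt hsd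
    have hidx : ((s * (d''+1) + i) % d + 1) % d = (s * (d''+1) + (i + 1)) % d := by
      rw [hmod, show s * (d''+1) + i + 1 = s * (d''+1) + (i + 1) from by ring]
    have hcond : ¬(((s * (d''+1) + i) % d + 1) % d = 0) := by
      rw [hidx, Nat.mod_eq_of_lt hsd1]; omega
    rw [show (⟨((s * (d''+1) + i) % d + 1) % d, Nat.mod_lt _ hd⟩ : Fin d)
        = ⟨(s * (d''+1) + (i + 1)) % d, Nat.mod_lt _ hd⟩ from Fin.ext hidx,
      if_neg hcond, one_mul, hsingle,
      show (b:ℤ) * -((n':ℤ) * (b:ℤ)^i * ∑ j ∈ Finset.range s, (b:ℤ)^(j * (d''+1)))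
        = -((n':ℤ) * (b:ℤ)^(i+1) * ∑ j ∈ Finset.range s, (b:ℤ)^(j * (d''+1))) from by ring]
  -- part 2
  have key2 : Dphi φ d n a (fvec b d (d''+1) (t'+1) n' hd α ((d''+1) - 1)) =
      fun j => HahnSeries.single (n' : ℤ) α * fvec b d (d''+1) (t'+1) n' hd α 0 j := by
    have hmulsum : (fun j => HahnSeries.single (n' : ℤ) α * fvec b d (d''+1) (t'+1) n' hd α 0 j)
        = ∑ s ∈ Finset.range (t'+1),
            Pi.single (⟨(s * (d''+1) + 0) % d, Nat.mod_lt _ hd⟩ : Fin d)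
              (HahnSeries.single (n' : ℤ) α *
                HahnSeries.single
                  (-((n' : ℤ) * (b : ℤ) ^ 0 * ∑ j ∈ Finset.range s, (b : ℤ) ^ (j * (d''+1))))
                  (α ^ (t'+1 - 1 - s))) := by
      funext j
      simp only [fvec, Finset.sum_apply, Finset.mul_sum, Pi.single_apply]
      exact Finset.sum_congr rfl fun s _ => by split <;> simp
    rw [hmulsum]
    simp only [fvec, Nat.add_sub_cancel]
    rw [Dphi_sum', Finset.sum_range_succ, Finset.sum_range_succ']
    have hdd : d = t' * (d''+1) + (d''+1) := by rw [hdt]; ring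
    congr 1
    · refine Finset.sum_congr rfl fun s hs => ?_
      have hs' := Finset.mem_range.1 hs
      rw [Dphi_pi_single' φ d n a hd]
      have hA : s * (d''+1) + d'' < d := mul_add_lt' hdt (by omega) (by omega)
      have hB : (s+1) * (d''+1) + 0 < d := mul_add_lt' hdt (by omega) (by omega)
      have hmodA : (s * (d''+1) + d'') % d = s * (d''+1) + d'' := Nat.mod_eq_of_lt hA
      have hABeq : s * (d''+1) + d'' + 1 = (s+1) * (d''+1) + 0 := by ring
      have hidx : ((s * (d''+1) + d'') % d + 1) % d = ((s+1) * (d''+1) + 0) % d := by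
        rw [hmodA, hABeq]
      have hcond : ¬(((s * (d''+1) + d'') % d + 1) % d = 0) := by
        rw [hidx, Nat.mod_eq_of_lt hB]; omega
      rw [show (⟨((s * (d''+1) + d'') % d + 1) % d, Nat.mod_lt _ hd⟩ : Fin d)
          = ⟨((s+1) * (d''+1) + 0) % d, Nat.mod_lt _ hd⟩ from Fin.ext hidx,
        if_neg hcond, one_mul, hsingle, HahnSeries.single_mul_single,
        show (b:ℤ) * -((n':ℤ) * (b:ℤ)^d'' * ∑ j ∈ Finset.range s, (b:ℤ)^(j*(d''+1)))
            = (n':ℤ) + -((n':ℤ) * (b:ℤ)^0 * ∑ j ∈ Finset.range (s+1), (b:ℤ)^(j*(d''+1)))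
          from by linear_combination -(hexp s),
        show (α:k)^(t'-s) = α * α^(t'-(s+1)) from by
          rw [show t'-s = (t'-(s+1))+1 from by omega, pow_succ']]
    · rw [Dphi_pi_single' φ d n a hd]
      have hA : t' * (d''+1) + d'' < d := by omega
      have hmodA : (t' * (d''+1) + d'') % d = t' * (d''+1) + d'' := Nat.mod_eq_of_lt hA
      have h2 : (t' * (d''+1) + d'' + 1) % d = 0 := by
        rw [show t' * (d''+1) + d'' + 1 = d from by omega, Nat.mod_self]
      have hcond : ((t' * (d''+1) + d'') % d + 1) % d = 0 := by rw [hmodA, h2]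
      rw [show (⟨((t' * (d''+1) + d'') % d + 1) % d, Nat.mod_lt _ hd⟩ : Fin d)
          = ⟨(0 * (d''+1) + 0) % d, Nat.mod_lt _ hd⟩ from
          Fin.ext (show ((t' * (d''+1) + d'') % d + 1) % d = (0 * (d''+1) + 0) % d by
            rw [hcond]; simp),
        if_pos hcond, hsingle, HahnSeries.single_mul_single, HahnSeries.single_mul_single,
        Finset.sum_range_zero, Nat.sub_self, Nat.sub_zero,
        show (n:ℤ) + (b:ℤ) * -((n':ℤ) * (b:ℤ)^d'' * ∑ j ∈ Finset.range t', (b:ℤ)^(j*(d''+1)))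
            = (n':ℤ) + -((n':ℤ) * (b:ℤ)^0 * 0) from by linear_combination hn - hexp t',
        show (a : k) * α^0 = α * α^t' from by rw [pow_zero, mul_one, ← hα, pow_succ']]
  refine ⟨key1, key2, ?_⟩
  -- part 3
  have hd' : 0 < (d''+1) := Nat.succ_pos _
  have hd'd : (d''+1) ≤ d :=
    calc (d''+1) = (d''+1) * 1 := (mul_one _).symm
    _ ≤ (d''+1) * (t'+1) := Nat.mul_le_mul_left _ (by omega)
    _ = d := hdt.symm
  have ht : 0 < (t'+1) := Nat.succ_pos _
  -- component formula
  have fcomp : ∀ (jn : ℕ), jn < (d''+1) → ∀ (i : Fin (d''+1)),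
      fvec b d (d''+1) (t'+1) n' hd α jn ⟨(i : ℕ), lt_of_lt_of_le i.isLt hd'd⟩ =
        if jn = (i : ℕ) then HahnSeries.single (0 : ℤ) (α ^ ((t'+1) - 1)) else 0 := by
    intro jn hjn i
    simp only [fvec, Finset.sum_apply, Pi.single_apply, Fin.mk.injEq]
    rw [Finset.sum_eq_single 0]
    · rw [show (0 * (d''+1) + jn) % d = jn from by rw [Nat.mod_eq_of_lt (by omega)]; omega]
      by_cases hji : jn = (i : ℕ)
      · rw [if_pos hji.symm, if_pos hji]
        simp
      · rw [if_neg (fun h => hji h.symm), if_neg hji]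
    · intro s hs hs0
      have hsd : s * (d''+1) + jn < d := mul_add_lt' hdt (Finset.mem_range.1 hs) hjn
      have hmod : (s * (d''+1) + jn) % d = s * (d''+1) + jn := Nat.mod_eq_of_lt hsd
      have hge : (d''+1) ≤ s * (d''+1) := by
        calc (d''+1) = 1 * (d''+1) := (one_mul _).symm
        _ ≤ s * (d''+1) := Nat.mul_le_mul_right _ (Nat.pos_of_ne_zero hs0)
      rw [hmod, if_neg (by have hi := i.isLt; omega)]
    · intro h0
      exact absurd (Finset.mem_range.2 ht) h0
  refine ⟨{ toFun := fun x => ∑ i : Fin (d''+1), x i • fvec b d (d''+1) (t'+1) n' hd α (i : ℕ),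
            map_add' := by intro x y; simp [add_smul, Finset.sum_add_distrib],
            map_smul' := by intro c x; simp [Finset.smul_sum, mul_smul] }, ?_, ?_, ?_⟩
  · -- injectivity
    have hxv : ∀ (x : Fin (d''+1) → LaurentSeries k) (i : Fin (d''+1)),
        (∑ j : Fin (d''+1), x j • fvec b d (d''+1) (t'+1) n' hd α (j : ℕ))
            ⟨(i : ℕ), lt_of_lt_of_le i.isLt hd'd⟩ =
          x i * HahnSeries.single (0 : ℤ) (α ^ ((t'+1) - 1)) := by
      intro x i
      rw [Finset.sum_apply]
      rw [Finset.sum_eq_single i]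
      · rw [Pi.smul_apply, smul_eq_mul, fcomp _ i.isLt i, if_pos rfl]
      · intro j _ hji
        rw [Pi.smul_apply, smul_eq_mul, fcomp _ j.isLt i,
          if_neg (fun h => hji (Fin.ext h)), mul_zero]
      · intro h; exact absurd (Finset.mem_univ i) h
    intro x y hxy
    funext i
    have h := congrFun hxy ⟨(i : ℕ), lt_of_lt_of_le i.isLt hd'd⟩
    simp only [LinearMap.coe_mk, AddHom.coe_mk] at h
    rw [hxv x i, hxv y i] at h
    exact mul_right_cancel₀ (HahnSeries.single_ne_zero (pow_ne_zero _ hα0)) h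
  · -- basis
    intro i
    simp only [LinearMap.coe_mk, AddHom.coe_mk]
    rw [Finset.sum_eq_single i]
    · rw [Pi.single_eq_same, one_smul]
    · intro j _ hji
      rw [Pi.single_eq_of_ne hji]
      exact zero_smul (LaurentSeries k) (fvec b d (d''+1) (t'+1) n' hd α (j : ℕ))
    · intro h; exact absurd (Finset.mem_univ i) h
  · -- commutation
    intro x
    simp only [LinearMap.coe_mk, AddHom.coe_mk]
    rw [Dphi_sum']
    simp only [Dphi_smul']
    have hconv : ∀ (g : Fin (d''+1) → (Fin d → LaurentSeries k)),
        ∑ j : Fin (d''+1), g j = ∑ jn ∈ Finset.range (d''+1), g ⟨jn % (d''+1), Nat.mod_lt _ hd'⟩ := by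
      intro g
      rw [← Fin.sum_univ_eq_sum_range (fun m => g ⟨m % (d''+1), Nat.mod_lt _ hd'⟩) (d''+1)]
      exact Finset.sum_congr rfl fun j _ => congrArg g (Fin.ext (Nat.mod_eq_of_lt j.isLt).symm)
    rw [hconv (fun j => Dphi φ (d''+1) n' α x j • fvec b d (d''+1) (t'+1) n' hd α (j : ℕ)),
      hconv (fun i => φ (x i) • Dphi φ d n a (fvec b d (d''+1) (t'+1) n' hd α (i : ℕ))),
      Finset.sum_range_succ', Finset.sum_range_succ]
    congr 1
    · refine Finset.sum_congr rfl fun jn hjn => ?_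
      have hjn' := Finset.mem_range.1 hjn
      have e1 : (jn + 1) % (d''+1) = jn + 1 := Nat.mod_eq_of_lt (by omega)
      have e2 : jn % (d''+1) = jn := Nat.mod_eq_of_lt (by omega)
      rw [Dphi_apply_ne' φ (d''+1) n' α x ⟨(jn+1) % (d''+1), Nat.mod_lt _ hd'⟩
        (show ¬((jn+1) % (d''+1) = 0) by omega)]
      refine congrArg₂ (· • ·) ?_ ?_
      · exact congrArg _ (congrArg x (Fin.ext (show (jn+1) % (d''+1) - 1 = jn % (d''+1) by
          rw [e1, e2]; omega)))
      · show fvec b d (d''+1) (t'+1) n' hd α ((jn+1) % (d''+1)) =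
          Dphi φ d n a (fvec b d (d''+1) (t'+1) n' hd α (jn % (d''+1)))
        rw [e1, e2, key1 jn (by omega)]
    · have e3 : d'' % (d''+1) = d'' := Nat.mod_eq_of_lt (by omega)
      have e4 : (0:ℕ) % (d''+1) = 0 := Nat.zero_mod _
      have key2s : Dphi φ d n a (fvec b d (d''+1) (t'+1) n' hd α d'') =
          HahnSeries.single (n' : ℤ) α • fvec b d (d''+1) (t'+1) n' hd α 0 := by
        have h := key2
        rw [show (d''+1) - 1 = d'' from rfl] at h
        rw [h]
        funext j
        rw [Pi.smul_apply, smul_eq_mul]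
      have hR : φ (x ⟨d'' % (d''+1), Nat.mod_lt _ hd'⟩) •
            Dphi φ d n a (fvec b d (d''+1) (t'+1) n' hd α (d'' % (d''+1))) =
          (HahnSeries.single (n' : ℤ) α * φ (x ⟨d'' % (d''+1), Nat.mod_lt _ hd'⟩)) •
            fvec b d (d''+1) (t'+1) n' hd α 0 := by
        rw [show fvec b d (d''+1) (t'+1) n' hd α (d'' % (d''+1))
            = fvec b d (d''+1) (t'+1) n' hd α d'' from by rw [e3], key2s, mul_comm]
        exact smul_smul (φ (x ⟨d'' % (d''+1), Nat.mod_lt _ hd'⟩))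
          (HahnSeries.single (n':ℤ) α) (fvec b d (d''+1) (t'+1) n' hd α 0)
      rw [hR, Dphi_apply_zero' φ (d''+1) n' α x ⟨0 % (d''+1), Nat.mod_lt _ hd'⟩
        (show (0:ℕ) % (d''+1) = 0 from e4)]
      refine congrArg₂ (· • ·) ?_ ?_
      · exact congrArg _ (congrArg _ (congrArg x (Fin.ext (show (d''+1) - 1 = d'' % (d''+1) by
          rw [e3]; omega))))
      · show fvec b d (d''+1) (t'+1) n' hd α (0 % (d''+1)) = fvec b d (d''+1) (t'+1) n' hd α 0
        rw [e4]
end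

section
/- Let Ōɠ= id, a ‚ąą k* with t-th roots őĪ_1, ..., őĪ_t all distinct (t coprime to p), and suppose d = d' t, n/(b^d ‚ąí 1) = n'/(b^{d'} ‚ąí 1). Then D(d, n, a) ‚ČÖ D(d', n', őĪ_1) ‚äē ... ‚äē D(d', n', őĪ_t). -/
open HahnSeries Finset

section Helpers
variable {k : Type*} [Field k]

lemma phiSingle (φ : LaurentSeries k →+* LaurentSeries k) (b : ℕ) (hb : 1 < b)
    (hφ1 : ∀ (f : LaurentSeries k) (m : ℤ), (φ f).coeff ((b : ℤ) * m) = f.coeff m)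
    (hφ2 : ∀ (f : LaurentSeries k) (m : ℤ), ¬ ((b : ℤ) ∣ m) → (φ f).coeff m = 0)
    (e : ℤ) (c : k) :
    φ (HahnSeries.single e c) = HahnSeries.single ((b : ℤ) * e) c := by
  have hb0 : (b : ℤ) ≠ 0 := by positivity
  ext m
  by_cases h : (b : ℤ) ∣ m
  · obtain ⟨m', rfl⟩ := h
    rw [hφ1, HahnSeries.coeff_single, HahnSeries.coeff_single]
    by_cases he : m' = e
    · simp [he]
    · rw [if_neg he, if_neg (fun hc => he (mul_left_cancel₀ hb0 hc))]
  · rw [hφ2 _ _ h, HahnSeries.coeff_single,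
      if_neg (by rintro rfl; exact h ⟨e, rfl⟩)]

def mexp (b d' n' : ℕ) (s : ℕ) : ℤ := -(n' : ℤ) * ∑ i ∈ Finset.range s, (b : ℤ) ^ (d' * i)

lemma mexp_zero (b d' n' : ℕ) : mexp b d' n' 0 = 0 := by simp [mexp]

lemma mexp_succ (b d' n' s : ℕ) :
    mexp b d' n' (s + 1) = (b : ℤ) ^ d' * mexp b d' n' s - n' := by
  unfold mexp
  rw [Finset.sum_range_succ']
  simp only [Nat.mul_succ, _root_.pow_add, Nat.mul_zero, pow_zero]
  rw [← Finset.sum_mul]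
  ring

lemma mexp_final (b d' t n n' : ℕ) (hb : 1 < b) (hd' : 0 < d') (ht : 0 < t)
    (hr : (n : ℤ) * ((b : ℤ) ^ d' - 1) = (n' : ℤ) * ((b : ℤ) ^ (d' * t) - 1)) :
    (n' : ℤ) - (b : ℤ) ^ d' * mexp b d' n' (t - 1) = (n : ℤ) := by
  have h1 : (∑ i ∈ Finset.range t, ((b : ℤ) ^ d') ^ i) * ((b : ℤ) ^ d' - 1)
      = ((b : ℤ) ^ d') ^ t - 1 := geom_sum_mul _ _
  have hb1 : ((b : ℤ) ^ d' - 1) ≠ 0 := by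
    have : (1 : ℤ) < (b : ℤ) ^ d' := by
      have h : (1:ℤ) < (b:ℤ) := by exact_mod_cast hb
      exact one_lt_pow₀ h hd'.ne'
    omega
  have hn : (n : ℤ) = (n' : ℤ) * ∑ i ∈ Finset.range t, (b : ℤ) ^ (d' * i) := by
    apply mul_right_cancel₀ hb1
    rw [hr]
    have h2 : ∑ i ∈ Finset.range t, (b : ℤ) ^ (d' * i)
        = ∑ i ∈ Finset.range t, ((b : ℤ) ^ d') ^ i := by
      apply Finset.sum_congr rfl; intro i _; rw [← pow_mul]
    rw [h2, mul_assoc, h1, ← pow_mul]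
  have h2 := mexp_succ b d' n' (t - 1)
  rw [Nat.sub_add_cancel ht] at h2
  have h3 : mexp b d' n' t = -(n':ℤ) * ∑ i ∈ Finset.range t, (b : ℤ) ^ (d' * i) := rfl
  rw [hn]
  linarith [h2, h3]

lemma ortho {t : ℕ} (ht : 0 < t) (htk : (t : k) ≠ 0) {a : k} (ha : a ≠ 0)
    (α : Fin t → k) (hroots : ∀ j, α j ^ t = a) (hdist : Function.Injective α)
    (j j' : Fin t) :
    ∑ s : Fin t, (t : k)⁻¹ * α j ^ (s : ℕ) * ((α j')⁻¹) ^ (s : ℕ)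
      = if j = j' then 1 else 0 := by
  have hα : ∀ i, α i ≠ 0 := fun i hz => ha (by rw [← hroots i, hz, zero_pow ht.ne'])
  have key : ∑ s : Fin t, (t : k)⁻¹ * α j ^ (s : ℕ) * ((α j')⁻¹) ^ (s : ℕ)
      = (t : k)⁻¹ * ∑ s ∈ Finset.range t, (α j * (α j')⁻¹) ^ s := by
    rw [Finset.mul_sum, ← Fin.sum_univ_eq_sum_range (fun s => (t:k)⁻¹ * (α j * (α j')⁻¹) ^ s)]
    apply Finset.sum_congr rfl; intro s _; rw [mul_pow]; ring
  rw [key]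
  by_cases h : j = j'
  · subst h
    rw [if_pos rfl, mul_inv_cancel₀ (hα j)]
    simp [inv_mul_cancel₀ htk]
  · rw [if_neg h]
    have hr1 : α j * (α j')⁻¹ ≠ 1 := fun hc => h (hdist ((mul_inv_eq_one₀ (hα j')).mp hc))
    have hrt : (α j * (α j')⁻¹) ^ t = 1 := by
      rw [mul_pow, hroots, inv_pow, hroots, mul_inv_cancel₀ ha]
    rw [geom_sum_eq hr1, hrt, sub_self, zero_div, mul_zero]

lemma single_sum {m : ℕ} (e : ℤ) (f : Fin m → k) :
    (HahnSeries.single e (∑ s, f s) : LaurentSeries k) = ∑ s, HahnSeries.single e (f s) :=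
  map_sum (HahnSeries.single.addMonoidHom e) f Finset.univ

lemma idx_lt (d' t : ℕ) (s : Fin t) (i : Fin d') : d' * (s : ℕ) + (i : ℕ) < d' * t := by
  have h2 : d' * ((s : ℕ) + 1) ≤ d' * t := Nat.mul_le_mul_left d' s.isLt
  have h4 : d' * ((s : ℕ) + 1) = d' * (s : ℕ) + d' := Nat.mul_succ d' (s : ℕ)
  have h3 := i.isLt
  omega

/-- The change-of-basis map. -/
noncomputable def Fhom (k : Type*) [Field k] (b d' t n' : ℕ) (α : Fin t → k) :
    (Fin (d' * t) → LaurentSeries k) →ₗ[LaurentSeries k]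
      (Fin t → Fin d' → LaurentSeries k) where
  toFun x := fun j i => ∑ s : Fin t,
      HahnSeries.single (-((b : ℤ) ^ (i : ℕ) * mexp b d' n' s)) ((t : k)⁻¹ * α j ^ (s : ℕ))
        * x ⟨d' * s + i, idx_lt d' t s i⟩
  map_add' x y := by
    funext j i
    simp [mul_add, Finset.sum_add_distrib]
  map_smul' c x := by
    funext j i
    simp only [Pi.smul_apply, smul_eq_mul, RingHom.id_apply, Finset.mul_sum]
    exact Finset.sum_congr rfl fun s _ => by ring


lemma Dphi_pos {k : Type*} [Field k] (φ : LaurentSeries k →+* LaurentSeries k)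
    (D N : ℕ) (a : k) (x : Fin D → LaurentSeries k) (r : Fin D) (h : (r : ℕ) ≠ 0) :
    Dphi φ D N a x r = φ (x ⟨(r : ℕ) - 1, by have := r.isLt; omega⟩) := by
  simp only [Dphi]; rw [if_neg h]

lemma Dphi_zero {k : Type*} [Field k] (φ : LaurentSeries k →+* LaurentSeries k)
    (D N : ℕ) (a : k) (x : Fin D → LaurentSeries k) (r : Fin D) (h : (r : ℕ) = 0) :
    Dphi φ D N a x r = HahnSeries.single (N : ℤ) a * φ (x ⟨D - 1, by have := r.isLt; omega⟩) := by
  simp only [Dphi]; rw [if_pos h]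

end Helpers

set_option maxHeartbeats 1000000 in
set_option synthInstance.maxHeartbeats 400000 in
/-- With `σ = id`, `t` coprime to `p`, `d = d' t`, `n/(b^d-1) = n'/(b^{d'}-1)`, and
`α_1, …, α_t` the (distinct) `t`-th roots of `a`, one has
`D(d,n,a) ≅ D(d',n',α_1) ⊕ ⋯ ⊕ D(d',n',α_t)`. -/
theorem stmt8 (p : ℕ) [Fact p.Prime]
    (k : Type*) [Field k] [IsAlgClosed k] [CharP k p] (b : ℕ) (hb : 1 < b)
    (φ : LaurentSeries k →+* LaurentSeries k)
    (hφ1 : ∀ (f : LaurentSeries k) (m : ℤ), (φ f).coeff ((b : ℤ) * m) = f.coeff m)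
    (hφ2 : ∀ (f : LaurentSeries k) (m : ℤ), ¬ ((b : ℤ) ∣ m) → (φ f).coeff m = 0)
    (d d' t : ℕ) (hd' : 0 < d') (ht : 0 < t) (htp : t.Coprime p)
    (hdt : d = d' * t) (hd : 0 < d)
    (n n' : ℕ)
    (hr : (n : ℤ) * ((b : ℤ) ^ d' - 1) = (n' : ℤ) * ((b : ℤ) ^ d - 1))
    (a : k) (ha : a ≠ 0)
    (α : Fin t → k) (hroots : ∀ j, α j ^ t = a) (hdist : Function.Injective α) :
    ∃ F : (Fin d → LaurentSeries k) ≃ₗ[LaurentSeries k]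
        (Fin t → Fin d' → LaurentSeries k),
      ∀ x, F (Dphi φ d n a x) = fun j => Dphi φ d' n' (α j) (F x j) := by
  classical
  subst hdt
  have htk : (t : k) ≠ 0 := by
    rw [Ne, CharP.cast_eq_zero_iff k p]
    exact (Nat.Prime.coprime_iff_not_dvd Fact.out).mp htp.symm
  have hα : ∀ i, α i ≠ 0 := fun i hz => ha (by rw [← hroots i, hz, zero_pow ht.ne'])
  have hphi : ∀ (e : ℤ) (c : k) (z : LaurentSeries k),
      φ (HahnSeries.single e c * z) = HahnSeries.single ((b : ℤ) * e) c * φ z := by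
    intro e c z; rw [map_mul, phiSingle φ b hb hφ1 hφ2]
  set F := Fhom k b d' t n' α with hFdef
  have hFapp : ∀ x (j : Fin t) (i : Fin d'), F x j i = ∑ s : Fin t,
      HahnSeries.single (-((b : ℤ) ^ (i : ℕ) * mexp b d' n' s)) ((t : k)⁻¹ * α j ^ (s : ℕ))
        * x ⟨d' * s + i, idx_lt d' t s i⟩ := fun x j i => rfl
  -- surjectivity
  have hsurj : Function.Surjective F := by
    intro y
    refine ⟨fun r => ∑ j' : Fin t,
      HahnSeries.single ((b : ℤ) ^ ((r : ℕ) % d') * mexp b d' n' ((r : ℕ) / d'))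
        ((α j')⁻¹ ^ ((r : ℕ) / d')) * y j' ⟨(r : ℕ) % d', Nat.mod_lt _ hd'⟩, ?_⟩
    funext j i
    rw [hFapp]
    have hmod : ∀ s : Fin t, (d' * (s : ℕ) + (i : ℕ)) % d' = (i : ℕ) := fun s => by
      rw [Nat.mul_add_mod, Nat.mod_eq_of_lt i.isLt]
    have hdiv : ∀ s : Fin t, (d' * (s : ℕ) + (i : ℕ)) / d' = (s : ℕ) := fun s => by
      rw [Nat.mul_add_div hd', Nat.div_eq_of_lt i.isLt, add_zero]
    calc (∑ s : Fin t,
        HahnSeries.single (-((b : ℤ) ^ (i : ℕ) * mexp b d' n' s)) ((t : k)⁻¹ * α j ^ (s : ℕ))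
          * ∑ j' : Fin t,
            HahnSeries.single ((b : ℤ) ^ ((d' * (s : ℕ) + (i : ℕ)) % d')
                * mexp b d' n' ((d' * (s : ℕ) + (i : ℕ)) / d'))
              ((α j')⁻¹ ^ ((d' * (s : ℕ) + (i : ℕ)) / d'))
            * y j' ⟨(d' * (s : ℕ) + (i : ℕ)) % d', Nat.mod_lt _ hd'⟩)
        = ∑ s : Fin t,
            HahnSeries.single (-((b : ℤ) ^ (i : ℕ) * mexp b d' n' s)) ((t : k)⁻¹ * α j ^ (s : ℕ))
              * ∑ j' : Fin t,
                HahnSeries.single ((b : ℤ) ^ (i : ℕ) * mexp b d' n' s) ((α j')⁻¹ ^ (s : ℕ))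
                  * y j' i := by
          apply Finset.sum_congr rfl; intro s _
          refine congrArg₂ (· * ·) rfl ?_
          apply Finset.sum_congr rfl; intro j' _
          refine congrArg₂ (· * ·) ?_ (congrArg (y j') (Fin.ext ?_))
          · rw [hmod s, hdiv s]
          · exact hmod s
      _ = ∑ s : Fin t, ∑ j' : Fin t,
            HahnSeries.single ((0 : ℤ)) (((t : k)⁻¹ * α j ^ (s : ℕ)) * (α j')⁻¹ ^ (s : ℕ))
              * y j' i := by
          apply Finset.sum_congr rfl; intro s _
          rw [Finset.mul_sum]
          apply Finset.sum_congr rfl; intro j' _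
          rw [← mul_assoc, HahnSeries.single_mul_single, neg_add_cancel]
      _ = ∑ j' : Fin t,
            HahnSeries.single ((0 : ℤ))
              (∑ s : Fin t, ((t : k)⁻¹ * α j ^ (s : ℕ)) * (α j')⁻¹ ^ (s : ℕ)) * y j' i := by
          rw [Finset.sum_comm]
          apply Finset.sum_congr rfl; intro j' _
          rw [single_sum, Finset.sum_mul]
      _ = y j i := by
          have : ∀ j' : Fin t,
              (∑ s : Fin t, ((t : k)⁻¹ * α j ^ (s : ℕ)) * (α j')⁻¹ ^ (s : ℕ))
                = if j = j' then 1 else 0 := fun j' => ortho ht htk ha α hroots hdist j j'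
          simp only [this, apply_ite (HahnSeries.single (0 : ℤ)), HahnSeries.single_zero_one,
            map_zero, ite_mul, one_mul, zero_mul]
          simp [Finset.sum_ite_eq]
  have hfr : Module.finrank (LaurentSeries k) (Fin (d' * t) → LaurentSeries k)
      = Module.finrank (LaurentSeries k) (Fin t → Fin d' → LaurentSeries k) := by
    simp [Module.finrank_pi, Module.finrank_pi_fintype, Fintype.card_fin, mul_comm]
  have hinj : Function.Injective F :=
    (LinearMap.injective_iff_surjective_of_finrank_eq_finrank hfr).mpr hsurj
  refine ⟨LinearEquiv.ofBijective F ⟨hinj, hsurj⟩, ?_⟩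
  intro x
  funext j
  show F (Dphi φ (d' * t) n a x) j = Dphi φ d' n' (α j) (F x j)
  funext i
  rw [hFapp]
  by_cases hi : (i : ℕ) = 0
  · obtain ⟨t', rfl⟩ : ∃ t', t = t' + 1 := ⟨t - 1, by omega⟩
    have hd1 : d' - 1 < d' := by omega
    have hlt2 : ∀ s : Fin (t' + 1), d' * (s : ℕ) + (d' - 1) < d' * (t' + 1) :=
      fun s => idx_lt d' (t' + 1) s ⟨d' - 1, hd1⟩
    have hzlt : ∀ s : Fin (t' + 1), d' * (s : ℕ) < d' * (t' + 1) := fun s => by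
      have := idx_lt d' (t' + 1) s ⟨0, hd'⟩
      simpa using this
    have hbp : (b : ℤ) * (b : ℤ) ^ (d' - 1) = (b : ℤ) ^ d' := by
      conv_rhs => rw [show d' = (d' - 1) + 1 by omega]
      rw [pow_succ']
    set L : Fin (t' + 1) → LaurentSeries k := fun s =>
      HahnSeries.single (-(mexp b d' n' s)) (((t' + 1 : ℕ) : k)⁻¹ * α j ^ (s : ℕ))
        * Dphi φ (d' * (t' + 1)) n a x ⟨d' * (s : ℕ), hzlt s⟩ with hLdef
    set R : Fin (t' + 1) → LaurentSeries k := fun s =>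
      HahnSeries.single ((n' : ℤ) + (b : ℤ) * -((b : ℤ) ^ (d' - 1) * mexp b d' n' s))
        (α j * (((t' + 1 : ℕ) : k)⁻¹ * α j ^ (s : ℕ)))
        * φ (x ⟨d' * (s : ℕ) + (d' - 1), hlt2 s⟩) with hRdef
    calc (∑ s : Fin (t' + 1),
          HahnSeries.single (-((b : ℤ) ^ (i : ℕ) * mexp b d' n' s))
              (((t' + 1 : ℕ) : k)⁻¹ * α j ^ (s : ℕ))
            * Dphi φ (d' * (t' + 1)) n a x ⟨d' * s + i, idx_lt d' (t' + 1) s i⟩)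
        = ∑ s, L s := by
          apply Finset.sum_congr rfl; intro s _
          simp only [hLdef]
          refine congrArg₂ (· * ·) ?_
            (congrArg (Dphi φ (d' * (t' + 1)) n a x) (Fin.ext ?_))
          · rw [hi, pow_zero, one_mul]
          · show d' * (s : ℕ) + (i : ℕ) = d' * (s : ℕ)
            omega
      _ = ∑ s, R s := by
          refine (Fintype.sum_equiv (finRotate (t' + 1)) R L ?_).symm
          rintro ⟨sv, hsv⟩
          by_cases hsv' : sv < t'
          · rw [finRotate_of_lt hsv']
            show HahnSeries.single ((n' : ℤ) + (b : ℤ) * -((b : ℤ) ^ (d' - 1) * mexp b d' n' sv))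
                (α j * (((t' + 1 : ℕ) : k)⁻¹ * α j ^ sv))
                * φ (x ⟨d' * sv + (d' - 1), hlt2 ⟨sv, hsv⟩⟩)
              = HahnSeries.single (-(mexp b d' n' (sv + 1))) (((t' + 1 : ℕ) : k)⁻¹ * α j ^ (sv + 1)) *
                (if d' * (sv + 1) = 0 then
                  HahnSeries.single (n : ℤ) a *
                    φ (x ⟨d' * (t' + 1) - 1,
                        Nat.sub_lt (Nat.mul_pos hd' (Nat.succ_pos t')) Nat.one_pos⟩)
                else
                  φ (x ⟨d' * (sv + 1) - 1,
                      by have := Nat.mul_le_mul_left d' (show sv + 1 ≤ t' + 1 by omega)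
                         have := Nat.mul_pos hd' (Nat.succ_pos t'); omega⟩))
            rw [if_neg (Nat.mul_ne_zero (by omega) (by omega))]
            refine congrArg₂ (· * ·) ?_ (congrArg φ (congrArg x (Fin.ext ?_)))
            · refine congrArg₂ (fun e c => (HahnSeries.single e c : LaurentSeries k)) ?_ ?_
              · rw [mexp_succ b d' n' sv, ← hbp]; ring
              · rw [pow_succ]; ring
            · show d' * sv + (d' - 1) = d' * (sv + 1) - 1
              have h5 : d' * (sv + 1) = d' * sv + d' := by ring
              omega
          · have hsv2 : sv = t' := by omega
            subst hsv2
            rw [show finRotate (sv + 1) ⟨sv, hsv⟩ = ⟨0, Nat.succ_pos sv⟩ from finRotate_last']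
            show HahnSeries.single ((n' : ℤ) + (b : ℤ) * -((b : ℤ) ^ (d' - 1) * mexp b d' n' sv))
                (α j * (((sv + 1 : ℕ) : k)⁻¹ * α j ^ sv))
                * φ (x ⟨d' * sv + (d' - 1), hlt2 ⟨sv, hsv⟩⟩)
              = HahnSeries.single (-(mexp b d' n' 0)) (((sv + 1 : ℕ) : k)⁻¹ * α j ^ 0) *
                (if d' * 0 = 0 then
                  HahnSeries.single (n : ℤ) a *
                    φ (x ⟨d' * (sv + 1) - 1,
                        Nat.sub_lt (Nat.mul_pos hd' (Nat.succ_pos sv)) Nat.one_pos⟩)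
                else
                  φ (x ⟨d' * 0 - 1,
                      by have := Nat.mul_pos hd' (Nat.succ_pos sv); omega⟩))
            rw [if_pos (Nat.mul_zero d')]
            conv_rhs => rw [← mul_assoc]
            rw [HahnSeries.single_mul_single]
            refine congrArg₂ (· * ·) ?_ (congrArg φ (congrArg x (Fin.ext ?_)))
            · refine congrArg₂ (fun e c => (HahnSeries.single e c : LaurentSeries k)) ?_ ?_
              · have hfin := mexp_final b d' (sv + 1) n n' hb hd' (Nat.succ_pos sv) hr
                rw [Nat.add_sub_cancel] at hfin
                rw [mexp_zero]
                have h2 : (b : ℤ) * ((b : ℤ) ^ (d' - 1) * mexp b d' n' sv)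
                    = (b : ℤ) ^ d' * mexp b d' n' sv := by rw [← hbp]; ring
                linarith [hfin, h2]
              · rw [← hroots j, pow_zero, pow_succ]; ring
            · show d' * sv + (d' - 1) = d' * (sv + 1) - 1
              have h5 : d' * (sv + 1) = d' * sv + d' := by ring
              omega
      _ = Dphi φ d' n' (α j) (F x j) i := by
          have h0 : Dphi φ d' n' (α j) (F x j) i
              = HahnSeries.single (n' : ℤ) (α j) * φ (F x j ⟨d' - 1, hd1⟩) :=
            Dphi_zero φ d' n' (α j) (F x j) i hi
          rw [h0, hFapp, map_sum, Finset.mul_sum]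
          apply Finset.sum_congr rfl; intro s _
          rw [hphi, ← mul_assoc, HahnSeries.single_mul_single]
  · have h0 : Dphi φ d' n' (α j) (F x j) i
        = φ (F x j ⟨(i : ℕ) - 1, by have := i.isLt; omega⟩) :=
      Dphi_pos φ d' n' (α j) (F x j) i hi
    rw [h0, hFapp, map_sum]
    apply Finset.sum_congr rfl; intro s _
    rw [hphi]
    have hD : Dphi φ (d' * t) n a x ⟨d' * (s : ℕ) + (i : ℕ), idx_lt d' t s i⟩
        = φ (x ⟨d' * (s : ℕ) + (i : ℕ) - 1, by have := idx_lt d' t s i; omega⟩) :=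
      Dphi_pos _ _ _ _ _ _ (by show d' * (s : ℕ) + (i : ℕ) ≠ 0; omega)
    rw [hD]
    refine congrArg₂ (· * ·) ?_ (congrArg φ (congrArg x (Fin.ext ?_)))
    · refine congrArg₂ (fun e c => (HahnSeries.single e c : LaurentSeries k)) ?_ rfl
      show -((b : ℤ) ^ (i : ℕ) * mexp b d' n' s) = (b : ℤ) * -((b : ℤ) ^ ((i : ℕ) - 1) * mexp b d' n' s)
      have hbp : (b : ℤ) * (b : ℤ) ^ ((i : ℕ) - 1) = (b : ℤ) ^ (i : ℕ) := by
        conv_rhs => rw [show (i : ℕ) = ((i : ℕ) - 1) + 1 by omega]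
        rw [pow_succ']
      rw [← hbp]; ring
    · show d' * (s : ℕ) + (i : ℕ) - 1 = d' * (s : ℕ) + ((i : ℕ) - 1)
      omega
end

section
/- Let Ōɠ= id, d = d' p, n/(b^d ‚ąí 1) = n'/(b^{d'} ‚ąí 1). Then D(d, n) = D(d, n, 1) admits a filtration 0 = D_0 ‚äā D_1 ‚äā ... ‚äā D_p = D(d, n) by ŌÜ-submodules with all successive quotients D_m / D_{m‚ąí1} isomorphic to D(d', n'). -/
set_option maxHeartbeats 1000000

namespace Stmt9Aux

open HahnSeries Finset Matrix

set_option linter.unusedSectionVars false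

variable {k : Type*} [Field k]

lemma phi_single' {b : ℕ} (hb : 1 < b) (φ : LaurentSeries k →+* LaurentSeries k)
    (hφ1 : ∀ (f : LaurentSeries k) (m : ℤ), (φ f).coeff ((b : ℤ) * m) = f.coeff m)
    (hφ2 : ∀ (f : LaurentSeries k) (m : ℤ), ¬ ((b : ℤ) ∣ m) → (φ f).coeff m = 0)
    (z : ℤ) (c : k) :
    φ (HahnSeries.single z c) = HahnSeries.single ((b:ℤ) * z) c := by
  have hb0 : (b:ℤ) ≠ 0 := by exact_mod_cast (by omega : b ≠ 0)
  ext m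
  by_cases hm : (b:ℤ) ∣ m
  · obtain ⟨m', rfl⟩ := hm
    rw [hφ1, HahnSeries.coeff_single, HahnSeries.coeff_single]
    congr 1
    simp only [eq_iff_iff]
    constructor
    · rintro rfl; rfl
    · intro h; exact mul_left_cancel₀ hb0 h
  · rw [hφ2 _ _ hm, HahnSeries.coeff_single_of_ne]
    rintro rfl
    exact hm ⟨z, rfl⟩

lemma Dphi_add (φ : LaurentSeries k →+* LaurentSeries k) (d n : ℕ) (a : k)
    (x y : Fin d → LaurentSeries k) :
    Dphi φ d n a (x + y) = Dphi φ d n a x + Dphi φ d n a y := by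
  funext j
  simp only [Dphi, Pi.add_apply, map_add]
  split <;> ring

lemma Dphi_zero (φ : LaurentSeries k →+* LaurentSeries k) (d n : ℕ) (a : k) :
    Dphi φ d n a 0 = 0 := by
  funext j
  simp only [Dphi, Pi.zero_apply, map_zero]
  split <;> simp

lemma Dphi_smul (φ : LaurentSeries k →+* LaurentSeries k) (d n : ℕ) (a : k)
    (c : LaurentSeries k) (x : Fin d → LaurentSeries k) :
    Dphi φ d n a (c • x) = φ c • Dphi φ d n a x := by
  funext j
  simp only [Dphi, Pi.smul_apply, smul_eq_mul, _root_.map_mul]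
  split <;> ring

lemma Dphi_sum_smul (φ : LaurentSeries k →+* LaurentSeries k) (d n : ℕ) (a : k)
    {ι : Type*} (s : Finset ι) (c : ι → LaurentSeries k) (y : ι → Fin d → LaurentSeries k) :
    Dphi φ d n a (∑ i ∈ s, c i • y i) = ∑ i ∈ s, φ (c i) • Dphi φ d n a (y i) := by
  classical
  induction s using Finset.induction_on with
  | empty => simp [Dphi_zero]
  | insert _ _ h ih => rw [Finset.sum_insert h, Finset.sum_insert h, Dphi_add, Dphi_smul, ih]

/-- `tt s = n' * (1 + b^{d'} + ... + b^{(s-1)d'})`. -/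
def tt (b d' n' : ℕ) (s : ℕ) : ℤ := (n' : ℤ) * ∑ l ∈ Finset.range s, (b:ℤ)^(l*d')

lemma tt_succ (b d' n' : ℕ) (s : ℕ) :
    tt b d' n' (s+1) = tt b d' n' s + (n':ℤ) * (b:ℤ)^(s*d') := by
  rw [tt, Finset.sum_range_succ, mul_add, tt]

lemma tt_rel (b d' n' : ℕ) (s : ℕ) :
    (b:ℤ)^d' * tt b d' n' s + n' = tt b d' n' (s+1) := by
  induction s with
  | zero => simp [tt]
  | succ s ih =>
    rw [tt_succ, tt_succ, mul_add]
    have : (b:ℤ)^d' * ((n':ℤ) * (b:ℤ)^(s*d')) = (n':ℤ) * (b:ℤ)^((s+1)*d') := by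
      rw [add_mul, one_mul, _root_.pow_add]; ring
    linarith [ih, this]

lemma tt_eq_n {b d' n' p d n : ℕ} (hb : 1 < b) (hd' : 0 < d') (hdt : d = d' * p)
    (hr : (n : ℤ) * ((b : ℤ) ^ d' - 1) = (n' : ℤ) * ((b : ℤ) ^ d - 1)) :
    (n : ℤ) = tt b d' n' p := by
  have hx : (1:ℤ) < (b:ℤ)^d' := by
    have : (1:ℤ) < (b:ℤ) := by exact_mod_cast hb
    exact one_lt_pow₀ this (by omega)
  have hne : (b:ℤ)^d' - 1 ≠ 0 := by omega
  have key : tt b d' n' p * ((b:ℤ)^d' - 1) = (n' : ℤ) * ((b : ℤ) ^ d - 1) := by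
    have hgs : (∑ l ∈ Finset.range p, ((b:ℤ)^d')^l) * ((b:ℤ)^d' - 1) = ((b:ℤ)^d')^p - 1 :=
      geom_sum_mul _ _
    have h1 : ∀ l, ((b:ℤ)^d')^l = (b:ℤ)^(l*d') := by
      intro l; rw [← pow_mul, mul_comm]
    have h2 : ((b:ℤ)^d')^p = (b:ℤ)^d := by rw [← pow_mul, hdt, mul_comm]
    rw [tt, mul_assoc]
    rw [Finset.sum_congr rfl (fun l _ => (h1 l).symm), hgs, h2]
  apply mul_right_cancel₀ hne
  rw [hr, ← key]

lemma dm1_mod {d d' p : ℕ} (hd' : 0 < d') (hp : 0 < p) (hdt : d = d' * p) :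
    (d-1) % d' = d' - 1 ∧ (d-1) / d' = p - 1 := by
  obtain ⟨q, hq⟩ : ∃ q, p = q + 1 := ⟨p-1, by omega⟩
  subst hq
  have h : d - 1 = d' * q + (d' - 1) := by rw [hdt, Nat.mul_succ]; omega
  constructor
  · rw [h, Nat.mul_add_mod, Nat.mod_eq_of_lt (by omega)]
  · rw [h, Nat.mul_add_div hd', Nat.div_eq_of_lt (by omega)]; omega

/-- The vectors `f_{i,j}`. -/
noncomputable def ff (k : Type*) [Field k] (b d d' n' : ℕ) (i j : ℕ) :
    Fin d → LaurentSeries k :=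
  fun v => if (v:ℕ) % d' = i then
    HahnSeries.single (-((b:ℤ)^i * tt b d' n' ((v:ℕ)/d')))
      ((((v:ℕ)/d' : ℕ) : k)^j) else 0

lemma single_sum {ι : Type*} (a : ℤ) (g : ι → k) (s : Finset ι) :
    ∑ μ ∈ s, HahnSeries.single a (g μ) = HahnSeries.single a (∑ μ ∈ s, g μ) :=
  (map_sum (HahnSeries.single.addMonoidHom a) g s).symm

lemma mat_inv_comb {F M : Type*} [Field F] [AddCommGroup M] [Module F M] {q : ℕ}
    (A : Matrix (Fin q) (Fin q) F) (hA : IsUnit A.det) (W : Fin q → M) (σ : Fin q) :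
    W σ = ∑ j, (A⁻¹ σ j) • ∑ τ, (A j τ) • W τ := by
  have h1 : ∀ j : Fin q, (A⁻¹ σ j) • ∑ τ, (A j τ) • W τ
      = ∑ τ, (A⁻¹ σ j * A j τ) • W τ := by
    intro j; rw [Finset.smul_sum]; simp [smul_smul]
  rw [Finset.sum_congr rfl (fun j _ => h1 j), Finset.sum_comm]
  have h2 : ∀ τ : Fin q, ∑ j, (A⁻¹ σ j * A j τ) • W τ = ((A⁻¹ * A) σ τ) • W τ := by
    intro τ; rw [← Finset.sum_smul, Matrix.mul_apply]
  rw [Finset.sum_congr rfl (fun τ _ => h2 τ), Matrix.nonsing_inv_mul A hA]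
  simp [Matrix.one_apply]

section main

variable {b p d d' n n' : ℕ} (hb : 1 < b) (hd' : 0 < d') (hp : 1 < p) (hdt : d = d' * p)
  (φ : LaurentSeries k →+* LaurentSeries k)
  (hφ1 : ∀ (f : LaurentSeries k) (m : ℤ), (φ f).coeff ((b : ℤ) * m) = f.coeff m)
  (hφ2 : ∀ (f : LaurentSeries k) (m : ℤ), ¬ ((b : ℤ) ∣ m) → (φ f).coeff m = 0)

include hb hd' hp hdt hφ1 hφ2 in
lemma ffA {i : ℕ} (j : ℕ) (hi : i + 1 < d') :
    Dphi φ d n 1 (ff k b d d' n' i j) = ff k b d d' n' (i+1) j := by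
  have hd : 0 < d := by rw [hdt]; positivity
  funext v
  rw [Dphi]
  by_cases hv0 : (v:ℕ) = 0
  · rw [if_pos hv0]
    have h1 : (d-1) % d' = d' - 1 := (dm1_mod hd' (by omega) hdt).1
    have h2 : ff k b d d' n' i j ⟨d-1, by omega⟩ = 0 := by
      rw [ff, if_neg]; simpa [h1] using (by omega : ¬ d' - 1 = i)
    have h3 : ff k b d d' n' (i+1) j v = 0 := by
      rw [ff, if_neg]; simp [hv0]
    rw [h2, h3, map_zero, mul_zero]
  · rw [if_neg hv0]
    by_cases hv : (v:ℕ) % d' = i + 1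
    · have hvd : d' * ((v:ℕ)/d') + (v:ℕ) % d' = (v:ℕ) := Nat.div_add_mod _ _
      have hw : (v:ℕ) - 1 = d' * ((v:ℕ)/d') + i := by omega
      have hwm : ((v:ℕ) - 1) % d' = i := by
        rw [hw, Nat.mul_add_mod, Nat.mod_eq_of_lt (by omega)]
      have hwd : ((v:ℕ) - 1) / d' = (v:ℕ)/d' := by
        rw [hw, Nat.mul_add_div hd', Nat.div_eq_of_lt (show i < d' by omega)]; omega
      rw [ff, ff]
      simp only [hwm, hwd, hv, if_pos]
      rw [phi_single' hb φ hφ1 hφ2]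
      congr 1
      rw [pow_succ]; ring
    · have hwm : ¬ (((v:ℕ) - 1) % d' = i) := by
        intro hcon
        have hvd : d' * (((v:ℕ)-1)/d') + (((v:ℕ)-1) % d') = ((v:ℕ)-1) := Nat.div_add_mod _ _
        have : (v:ℕ) = d' * (((v:ℕ)-1)/d') + (i+1) := by omega
        rw [this, Nat.mul_add_mod, Nat.mod_eq_of_lt (by omega)] at hv
        exact hv rfl
      rw [ff, ff, if_neg hwm, if_neg hv, map_zero]

include hb hd' hp hdt hφ1 hφ2 in
lemma ffB [CharP k p] (hn : (n:ℤ) = tt b d' n' p) (j : ℕ) :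
    Dphi φ d n 1 (ff k b d d' n' (d'-1) j) =
      ∑ μ ∈ Finset.range (j+1),
        (HahnSeries.single (n':ℤ) ((-1:k)^(μ+j) * (j.choose μ : k))) • ff k b d d' n' 0 μ := by
  have hd : 0 < d := by rw [hdt]; positivity
  funext v
  have hRHS : (∑ μ ∈ Finset.range (j+1),
        (HahnSeries.single (n':ℤ) ((-1:k)^(μ+j) * (j.choose μ : k))) • ff k b d d' n' 0 μ) v
      = if (v:ℕ) % d' = 0 then
          HahnSeries.single ((n':ℤ) - tt b d' n' ((v:ℕ)/d'))
            (((((v:ℕ)/d' : ℕ) : k) - 1)^j) else 0 := by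
    rw [Finset.sum_apply]
    by_cases h : (v:ℕ) % d' = 0
    · rw [if_pos h]
      have hterm : ∀ μ ∈ Finset.range (j+1),
          ((HahnSeries.single (n':ℤ) ((-1:k)^(μ+j) * (j.choose μ : k))) • ff k b d d' n' 0 μ) v
          = HahnSeries.single ((n':ℤ) - tt b d' n' ((v:ℕ)/d'))
              ((-1:k)^(μ+j) * ((((v:ℕ)/d' : ℕ):k))^μ * (1:k)^(j-μ) * (j.choose μ : k)) := by
        intro μ _
        rw [Pi.smul_apply, ff, if_pos h, smul_eq_mul, HahnSeries.single_mul_single,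
          show (n':ℤ) + -((b:ℤ)^0 * tt b d' n' ((v:ℕ)/d'))
              = (n':ℤ) - tt b d' n' ((v:ℕ)/d') by rw [pow_zero]; ring,
          show ((-1:k)^(μ+j) * (j.choose μ : k)) * ((((v:ℕ)/d' : ℕ):k))^μ
              = (-1:k)^(μ+j) * ((((v:ℕ)/d' : ℕ):k))^μ * (1:k)^(j-μ) * (j.choose μ : k) by
            rw [one_pow]; ring]
      rw [Finset.sum_congr rfl hterm, single_sum]
      congr 1
      exact (sub_pow ((((v:ℕ)/d' : ℕ):k)) 1 j).symm
    · rw [if_neg h]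
      apply Finset.sum_eq_zero
      intro μ _
      rw [Pi.smul_apply, ff, if_neg h, smul_zero]
  rw [hRHS, Dphi]
  by_cases hv0 : (v:ℕ) = 0
  · rw [if_pos hv0]
    have h1 : (d-1) % d' = d' - 1 := (dm1_mod hd' (by omega) hdt).1
    have h2 : (d-1) / d' = p - 1 := (dm1_mod hd' (by omega) hdt).2
    have h3 : ff k b d d' n' (d'-1) j ⟨d-1, by omega⟩ = HahnSeries.single
        (-((b:ℤ)^(d'-1) * tt b d' n' (p-1))) (((p-1 : ℕ) : k)^j) := by
      rw [ff]; simp [h1, h2]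
    rw [h3, phi_single' hb φ hφ1 hφ2, HahnSeries.single_mul_single]
    have hv' : (v:ℕ) % d' = 0 := by rw [hv0]; exact Nat.zero_mod _
    rw [if_pos hv', hv0, Nat.zero_div]
    have ht0 : tt b d' n' 0 = 0 := by simp [tt]
    rw [ht0, sub_zero, Nat.cast_zero, zero_sub]
    have hrel : (b:ℤ)^d' * tt b d' n' (p-1) + n' = tt b d' n' p := by
      have := tt_rel b d' n' (p-1)
      rwa [show p - 1 + 1 = p by omega] at this
    have hbp : (b:ℤ) * (b:ℤ)^(d'-1) = (b:ℤ)^d' := by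
      rw [← pow_succ']; congr 1; omega
    have hc1 : ((p-1 : ℕ) : k) = -1 := by
      rw [Nat.cast_sub (by omega), CharP.cast_eq_zero k p, Nat.cast_one, zero_sub]
    rw [show (n:ℤ) + (b:ℤ) * -((b:ℤ)^(d'-1) * tt b d' n' (p-1)) = (n':ℤ) by
      rw [mul_neg, ← mul_assoc, hbp]; linarith [hrel, hn], one_mul, hc1]
  · rw [if_neg hv0]
    by_cases h : (v:ℕ) % d' = 0
    · have hvd : d' * ((v:ℕ)/d') + (v:ℕ) % d' = (v:ℕ) := Nat.div_add_mod _ _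
      have hs1 : 1 ≤ (v:ℕ)/d' := by
        by_contra hc
        have h0 : (v:ℕ)/d' = 0 := Nat.eq_zero_of_not_pos (fun hh => hc hh)
        rw [h0, Nat.mul_zero] at hvd
        omega
      have hw : (v:ℕ) - 1 = d' * ((v:ℕ)/d' - 1) + (d' - 1) := by
        have : d' * ((v:ℕ)/d' - 1) + d' = d' * ((v:ℕ)/d') := by
          rw [← Nat.mul_succ]; congr 1; omega
        omega
      have hwm : ((v:ℕ) - 1) % d' = d' - 1 := by
        rw [hw, Nat.mul_add_mod, Nat.mod_eq_of_lt (by omega)]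
      have hwd : ((v:ℕ) - 1) / d' = (v:ℕ)/d' - 1 := by
        rw [hw, Nat.mul_add_div hd', Nat.div_eq_of_lt (show d'-1 < d' by omega)]
        omega
      rw [if_pos h]
      have h4 : ff k b d d' n' (d'-1) j ⟨(v:ℕ)-1, by have := v.isLt; omega⟩ = HahnSeries.single
          (-((b:ℤ)^(d'-1) * tt b d' n' ((v:ℕ)/d' - 1))) ((((v:ℕ)/d' - 1 : ℕ) : k)^j) := by
        rw [ff]; simp [hwm, hwd]
      rw [h4, phi_single' hb φ hφ1 hφ2]
      have hrel : (b:ℤ)^d' * tt b d' n' ((v:ℕ)/d' - 1) + n' = tt b d' n' ((v:ℕ)/d') := by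
        have := tt_rel b d' n' ((v:ℕ)/d' - 1)
        rwa [show (v:ℕ)/d' - 1 + 1 = (v:ℕ)/d' by omega] at this
      have hbp : (b:ℤ) * (b:ℤ)^(d'-1) = (b:ℤ)^d' := by
        rw [← pow_succ']; congr 1; omega
      rw [show (b:ℤ) * -((b:ℤ)^(d'-1) * tt b d' n' ((v:ℕ)/d' - 1))
            = (n':ℤ) - tt b d' n' ((v:ℕ)/d') by
          rw [mul_neg, ← mul_assoc, hbp]; linarith [hrel],
        show (((v:ℕ)/d' - 1 : ℕ) : k) = (((v:ℕ)/d' : ℕ) : k) - 1 by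
          rw [Nat.cast_sub hs1, Nat.cast_one]]
    · rw [if_neg h]
      have hwm : ¬ (((v:ℕ) - 1) % d' = d' - 1) := by
        intro hcon
        have hvd : d' * (((v:ℕ)-1)/d') + (((v:ℕ)-1) % d') = ((v:ℕ)-1) := Nat.div_add_mod _ _
        have hv : (v:ℕ) = d' * (((v:ℕ)-1)/d' + 1) := by rw [Nat.mul_succ]; omega
        rw [hv, Nat.mul_mod_right] at h
        exact h rfl
      rw [ff, if_neg hwm, map_zero]

include hb hd' hp hdt in
lemma e_mem_span [CharP k p] (v : Fin d) :
    (fun v' => if v = v' then (1:LaurentSeries k) else 0) ∈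
      Submodule.span (LaurentSeries k)
        {x | ∃ i < d', ∃ j < p, x = ff k b d d' n' i j} := by
  classical
  set i := (v:ℕ) % d' with hi_def
  set s := (v:ℕ) / d' with hs_def
  have hiv : i < d' := Nat.mod_lt _ hd'
  have hsv : s < p := by
    rw [hs_def]
    exact (Nat.div_lt_iff_lt_mul hd').mpr (by rw [mul_comm]; exact hdt ▸ v.isLt)
  have hvds : d' * s + i = (v:ℕ) := Nat.div_add_mod _ _
  set W : Fin p → Fin d → LaurentSeries k := fun σ v' =>
    if (v':ℕ) = d' * (σ:ℕ) + i then
      HahnSeries.single (-((b:ℤ)^i * tt b d' n' σ)) (1:k) else 0 with hW_def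
  have hffW : ∀ j : ℕ, ff k b d d' n' i j
      = ∑ σ : Fin p, ((HahnSeries.C ((((σ:ℕ):ℕ):k)^j) : LaurentSeries k)) • W σ := by
    intro j
    funext v'
    rw [Finset.sum_apply, ff]
    by_cases hv' : (v':ℕ) % d' = i
    · have hs' : (v':ℕ)/d' < p := by
        exact (Nat.div_lt_iff_lt_mul hd').mpr (by rw [mul_comm]; exact hdt ▸ v'.isLt)
      rw [if_pos hv']
      rw [Finset.sum_eq_single (⟨(v':ℕ)/d', hs'⟩ : Fin p)]
      · rw [Pi.smul_apply, hW_def]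
        simp only []
        rw [if_pos (by
          show (v':ℕ) = d' * ((v':ℕ)/d') + i
          conv_lhs => rw [← Nat.div_add_mod (v':ℕ) d', hv'])]
        rw [smul_eq_mul, HahnSeries.C_apply, HahnSeries.single_mul_single, zero_add, mul_one]
      · intro σ _ hσ
        rw [Pi.smul_apply, hW_def]
        simp only []
        rw [if_neg, smul_zero]
        intro hcon
        apply hσ
        have : (v':ℕ)/d' = (σ:ℕ) := by
          rw [hcon, Nat.mul_add_div hd', Nat.div_eq_of_lt hiv]
          omega
        exact Fin.ext this.symm
      · intro hcon; exact absurd (Finset.mem_univ _) hcon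
    · rw [if_neg hv']
      symm
      apply Finset.sum_eq_zero
      intro σ _
      rw [Pi.smul_apply, hW_def]
      simp only []
      rw [if_neg, smul_zero]
      intro hcon
      apply hv'
      rw [hcon, Nat.mul_add_mod, Nat.mod_eq_of_lt hiv]
  set A : Matrix (Fin p) (Fin p) (LaurentSeries k) :=
    fun jj σ => (HahnSeries.C ((((σ:ℕ):ℕ):k)^(jj:ℕ)) : LaurentSeries k) with hA_def
  have hdet : IsUnit A.det := by
    have hAeq : A = (HahnSeries.C (R := k) (Γ := ℤ)).mapMatrix
        ((Matrix.vandermonde (fun σ : Fin p => (((σ:ℕ):ℕ):k)))ᵀ) := by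
      funext jj σ
      simp [hA_def, Matrix.vandermonde]
    have hvd : (Matrix.vandermonde (fun σ : Fin p => (((σ:ℕ):ℕ):k))).det ≠ 0 := by
      rw [Matrix.det_vandermonde]
      apply Finset.prod_ne_zero_iff.mpr
      intro x _
      apply Finset.prod_ne_zero_iff.mpr
      intro y hy
      have hxy' : x < y := Finset.mem_Ioi.mp hy
      have hxy : (x:ℕ) < (y:ℕ) := hxy'
      intro hcon
      have : ((x:ℕ):k) = ((y:ℕ):k) := by linear_combination -hcon
      have := CharP.natCast_injOn_Iio k p (Set.mem_Iio.mpr x.isLt)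
        (Set.mem_Iio.mpr y.isLt) this
      omega
    rw [hAeq, ← RingHom.map_det, Matrix.det_transpose]
    exact isUnit_iff_ne_zero.mpr (fun hcon => hvd (HahnSeries.C_injective (by
      rw [hcon, map_zero])))
  have hWmem : ∀ σ : Fin p, W σ ∈ Submodule.span (LaurentSeries k)
      {x | ∃ i < d', ∃ j < p, x = ff k b d d' n' i j} := by
    intro σ
    rw [mat_inv_comb A hdet W σ]
    apply Submodule.sum_mem
    intro jj _
    apply Submodule.smul_mem
    have : ∑ τ, A jj τ • W τ = ff k b d d' n' i (jj:ℕ) := (hffW (jj:ℕ)).symm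
    rw [this]
    exact Submodule.subset_span ⟨i, hiv, (jj:ℕ), jj.isLt, rfl⟩
  have hev : (fun v' => if v = v' then (1:LaurentSeries k) else 0)
      = HahnSeries.single ((b:ℤ)^i * tt b d' n' s) (1:k) • W ⟨s, hsv⟩ := by
    funext v'
    rw [Pi.smul_apply, hW_def]
    simp only []
    by_cases h : (v':ℕ) = d' * s + i
    · rw [if_pos h, if_pos (Fin.ext (by omega) : v = v'), smul_eq_mul,
        HahnSeries.single_mul_single, one_mul, add_neg_cancel, HahnSeries.single_zero_one]
    · rw [if_neg h, if_neg, smul_zero]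
      intro hcon
      exact h (by rw [← hcon]; omega)
  rw [hev]
  exact Submodule.smul_mem _ _ (hWmem _)

end main

end Stmt9Aux

/-- With `σ = id`, `char k = p`, `d = d' p` and `n/(b^d-1) = n'/(b^{d'}-1)`, the
φ-module `D(d,n) = D(d,n,1)` admits an increasing filtration
`0 = D_0 ⊂ D_1 ⊂ ⋯ ⊂ D_p = D(d,n)` by φ-stable submodules whose successive quotients
`D_m / D_{m-1}` are all isomorphic to `D(d',n')`.  (The isomorphism of the quotient
with `D(d',n')` is expressed by a linear map `F : D(d',n') → D_m` which is injective
and surjective modulo `D_{m-1}` and commutes with φ modulo `D_{m-1}`.) -/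
theorem stmt9 (p : ℕ) [Fact p.Prime]
    (k : Type*) [Field k] [IsAlgClosed k] [CharP k p] (b : ℕ) (hb : 1 < b)
    (φ : LaurentSeries k →+* LaurentSeries k)
    (hφ1 : ∀ (f : LaurentSeries k) (m : ℤ), (φ f).coeff ((b : ℤ) * m) = f.coeff m)
    (hφ2 : ∀ (f : LaurentSeries k) (m : ℤ), ¬ ((b : ℤ) ∣ m) → (φ f).coeff m = 0)
    (d d' : ℕ) (hd' : 0 < d') (hdt : d = d' * p) (hd : 0 < d)
    (n n' : ℕ)
    (hr : (n : ℤ) * ((b : ℤ) ^ d' - 1) = (n' : ℤ) * ((b : ℤ) ^ d - 1)) :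
    ∃ D : ℕ → Submodule (LaurentSeries k) (Fin d → LaurentSeries k),
      D 0 = ⊥ ∧ D p = ⊤ ∧
      (∀ m, D m ≤ D (m + 1)) ∧
      (∀ m, ∀ x ∈ D m, Dphi φ d n 1 x ∈ D m) ∧
      (∀ m < p,
        ∃ F : (Fin d' → LaurentSeries k) →ₗ[LaurentSeries k]
            (Fin d → LaurentSeries k),
          (∀ x, F x ∈ D (m + 1)) ∧
          (∀ x, F (Dphi φ d' n' 1 x) - Dphi φ d n 1 (F x) ∈ D m) ∧
          (∀ x, F x ∈ D m → x = 0) ∧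
          (∀ y ∈ D (m + 1), ∃ x, y - F x ∈ D m)) := by
  classical
  obtain ⟨e, he⟩ : ∃ e, d' = e + 1 := ⟨d' - 1, by omega⟩
  subst he
  have hp2 : 1 < p := (Fact.out : p.Prime).one_lt
  have hn : (n:ℤ) = Stmt9Aux.tt b (e+1) n' p := Stmt9Aux.tt_eq_n hb hd' hdt hr
  -- the filtration
  set SS : ℕ → Set (Fin d → LaurentSeries k) :=
    fun m => {x | ∃ i < e+1, ∃ j < m, x = Stmt9Aux.ff k b d (e+1) n' i j} with hSS_def
  have hmono : ∀ m, Submodule.span (LaurentSeries k) (SS m)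
      ≤ Submodule.span (LaurentSeries k) (SS (m+1)) := by
    intro m
    apply Submodule.span_mono
    rintro x ⟨i, hi, j, hj, rfl⟩
    exact ⟨i, hi, j, by omega, rfl⟩
  have hzero : Submodule.span (LaurentSeries k) (SS 0) = ⊥ := by
    have : SS 0 = ∅ := by
      rw [Set.eq_empty_iff_forall_notMem]
      rintro x ⟨i, hi, j, hj, rfl⟩
      omega
    rw [this, Submodule.span_empty]
  have htop : Submodule.span (LaurentSeries k) (SS p) = ⊤ := by
    rw [eq_top_iff]
    intro x _
    rw [pi_eq_sum_univ x]
    exact Submodule.sum_mem _ (fun v _ => Submodule.smul_mem _ _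
      (Stmt9Aux.e_mem_span hb hd' hp2 hdt v))
  have hstab : ∀ m, ∀ x ∈ Submodule.span (LaurentSeries k) (SS m),
      Dphi φ d n 1 x ∈ Submodule.span (LaurentSeries k) (SS m) := by
    intro m x hx
    induction hx using Submodule.span_induction with
    | mem x hxS =>
      obtain ⟨i, hi, j, hj, rfl⟩ := hxS
      by_cases hi1 : i + 1 < e + 1
      · rw [Stmt9Aux.ffA hb hd' hp2 hdt φ hφ1 hφ2 j hi1]
        exact Submodule.subset_span ⟨i+1, hi1, j, hj, rfl⟩
      · have hie : i = e := by omega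
        have hBj := Stmt9Aux.ffB hb hd' hp2 hdt φ hφ1 hφ2 hn j
        simp only [Nat.add_sub_cancel] at hBj
        rw [hie, hBj]
        refine Submodule.sum_mem _ (fun μ hμ => Submodule.smul_mem _ _
          (Submodule.subset_span ⟨0, by omega, μ, ?_, rfl⟩))
        have := Finset.mem_range.mp hμ
        omega
    | zero => rw [Stmt9Aux.Dphi_zero]; exact Submodule.zero_mem _
    | add x y hx hy ihx ihy =>
      rw [Stmt9Aux.Dphi_add]; exact Submodule.add_mem _ ihx ihy
    | smul c x hx ih =>
      rw [Stmt9Aux.Dphi_smul]; exact Submodule.smul_mem _ _ ih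
  refine ⟨fun m => Submodule.span (LaurentSeries k) (SS m), hzero, htop, hmono, hstab, ?_⟩
  -- the basis given by the f_{i,j}
  have hsetp : SS p = Set.range (fun q : Fin (e+1) × Fin p =>
      Stmt9Aux.ff k b d (e+1) n' (q.1:ℕ) (q.2:ℕ)) := by
    ext x
    constructor
    · rintro ⟨i, hi, j, hj, rfl⟩
      exact ⟨(⟨i, hi⟩, ⟨j, hj⟩), rfl⟩
    · rintro ⟨⟨i, j⟩, rfl⟩
      exact ⟨(i:ℕ), i.isLt, (j:ℕ), j.isLt, rfl⟩
  have hsp : ⊤ ≤ Submodule.span (LaurentSeries k) (Set.range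
      (fun q : Fin (e+1) × Fin p => Stmt9Aux.ff k b d (e+1) n' (q.1:ℕ) (q.2:ℕ))) := by
    rw [← hsetp, htop]
  have hli : LinearIndependent (LaurentSeries k)
      (fun q : Fin (e+1) × Fin p => Stmt9Aux.ff k b d (e+1) n' (q.1:ℕ) (q.2:ℕ)) := by
    apply linearIndependent_of_top_le_span_of_card_eq_finrank hsp
    rw [Module.finrank_fin_fun]
    simp [hdt]
  set B : Module.Basis (Fin (e+1) × Fin p) (LaurentSeries k) (Fin d → LaurentSeries k) :=
    Module.Basis.mk hli hsp with hB_def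
  -- part 5
  intro m hm
  set F : (Fin (e+1) → LaurentSeries k) →ₗ[LaurentSeries k] (Fin d → LaurentSeries k) :=
    Fintype.linearCombination (LaurentSeries k)
      (fun i : Fin (e+1) => Stmt9Aux.ff k b d (e+1) n' (i:ℕ) m)
    with hF_def
  have hF : ∀ x, F x = ∑ i : Fin (e+1), x i • Stmt9Aux.ff k b d (e+1) n' (i:ℕ) m := by
    intro x
    rw [hF_def, Fintype.linearCombination_apply]
  refine ⟨F, ?_, ?_, ?_, ?_⟩
  · -- F x ∈ D (m+1)
    intro x
    rw [hF]
    exact Submodule.sum_mem _ (fun i _ => Submodule.smul_mem _ _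
      (Submodule.subset_span ⟨(i:ℕ), i.isLt, m, by omega, rfl⟩))
  · -- commutation modulo D m
    intro x
    have hDx : ∀ i : Fin e, (Dphi φ (e+1) n' 1 x) i.succ = φ (x i.castSucc) := by
      intro i
      simp only [Dphi]
      rw [if_neg (by simp)]
      exact congrArg (fun v => φ (x v)) (Fin.ext (by simp))
    have hDx0 : (Dphi φ (e+1) n' 1 x) 0
        = HahnSeries.single ((n':ℕ):ℤ) (1:k) * φ (x (Fin.last e)) := by
      simp only [Dphi]
      rw [if_pos (by simp)]
      exact congrArg (fun v => HahnSeries.single ((n':ℕ):ℤ) (1:k) * φ (x v)) (Fin.ext (by simp))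
    have hBm := Stmt9Aux.ffB hb hd' hp2 hdt φ hφ1 hφ2 hn m
    simp only [Nat.add_sub_cancel] at hBm
    have h1 : F (Dphi φ (e+1) n' 1 x)
        = (HahnSeries.single ((n':ℕ):ℤ) (1:k) * φ (x (Fin.last e)))
            • Stmt9Aux.ff k b d (e+1) n' 0 m
          + ∑ i : Fin e, φ (x i.castSucc) • Stmt9Aux.ff k b d (e+1) n' ((i:ℕ)+1) m := by
      rw [hF, Fin.sum_univ_succ, hDx0]
      simp only [hDx, Fin.val_succ, Fin.val_zero]
    have h2 : Dphi φ d n 1 (F x)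
        = ∑ i : Fin e, φ (x i.castSucc) • Stmt9Aux.ff k b d (e+1) n' ((i:ℕ)+1) m
          + φ (x (Fin.last e)) • (∑ μ ∈ Finset.range (m+1),
              (HahnSeries.single (n':ℤ) ((-1:k)^(μ+m) * (m.choose μ : k)))
                • Stmt9Aux.ff k b d (e+1) n' 0 μ) := by
      have hffAi : ∀ i : Fin e, Dphi φ d n 1 (Stmt9Aux.ff k b d (e+1) n' (i:ℕ) m)
          = Stmt9Aux.ff k b d (e+1) n' ((i:ℕ)+1) m := fun i =>
        Stmt9Aux.ffA hb hd' hp2 hdt φ hφ1 hφ2 m (by have := i.isLt; omega)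
      rw [hF, Stmt9Aux.Dphi_sum_smul, Fin.sum_univ_castSucc]
      simp only [Fin.coe_castSucc, Fin.val_last, hffAi, hBm]
    have hc : HahnSeries.single ((n':ℕ):ℤ) ((-1:k)^(m+m) * (m.choose m : k))
        = HahnSeries.single ((n':ℕ):ℤ) (1:k) := by
      congr 1
      rw [Nat.choose_self, Nat.cast_one, mul_one, Even.neg_one_pow ⟨m, rfl⟩]
    rw [h1, h2, Finset.sum_range_succ, hc]
    have hre : (HahnSeries.single ((n':ℕ):ℤ) (1:k) * φ (x (Fin.last e)))
            • Stmt9Aux.ff k b d (e+1) n' 0 m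
          + (∑ i : Fin e, φ (x i.castSucc) • Stmt9Aux.ff k b d (e+1) n' ((i:ℕ)+1) m)
          - ((∑ i : Fin e, φ (x i.castSucc) • Stmt9Aux.ff k b d (e+1) n' ((i:ℕ)+1) m)
            + φ (x (Fin.last e)) • ((∑ μ ∈ Finset.range m,
                (HahnSeries.single ((n':ℕ):ℤ) ((-1:k)^(μ+m) * (m.choose μ : k)))
                  • Stmt9Aux.ff k b d (e+1) n' 0 μ)
              + HahnSeries.single ((n':ℕ):ℤ) (1:k) • Stmt9Aux.ff k b d (e+1) n' 0 m))
        = -(φ (x (Fin.last e)) • (∑ μ ∈ Finset.range m,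
            (HahnSeries.single ((n':ℕ):ℤ) ((-1:k)^(μ+m) * (m.choose μ : k)))
              • Stmt9Aux.ff k b d (e+1) n' 0 μ)) := by
      rw [smul_add, mul_smul, smul_comm (HahnSeries.single ((n':ℕ):ℤ) (1:k))
        (φ (x (Fin.last e))) (Stmt9Aux.ff k b d (e+1) n' 0 m)]
      abel
    rw [hre]
    exact Submodule.neg_mem _ (Submodule.smul_mem _ _ (Submodule.sum_mem _
      (fun μ hμ => Submodule.smul_mem _ _ (Submodule.subset_span
        ⟨0, by omega, μ, Finset.mem_range.mp hμ, rfl⟩))))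
  · -- injectivity
    intro x hFx
    funext i0
    have hcoord : ∀ (i : Fin (e+1)) (j : ℕ) (hj : j < p),
        B.coord (i0, ⟨m, hm⟩) (Stmt9Aux.ff k b d (e+1) n' (i:ℕ) j)
          = if ((i, ⟨j, hj⟩) : Fin (e+1) × Fin p) = (i0, ⟨m, hm⟩) then 1 else 0 := by
      intro i j hj
      rw [hB_def]
      exact Module.Basis.mk_coord_apply (hli := hli) (hsp := hsp)
        (i := (i0, ⟨m, hm⟩)) (j := (i, ⟨j, hj⟩))
    have hker : ∀ y ∈ Submodule.span (LaurentSeries k) (SS m),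
        B.coord (i0, ⟨m, hm⟩) y = 0 := by
      intro y hy
      have hle : Submodule.span (LaurentSeries k) (SS m)
          ≤ LinearMap.ker (B.coord (i0, ⟨m, hm⟩)) := by
        rw [Submodule.span_le]
        rintro z ⟨i, hi, j, hj, rfl⟩
        rw [SetLike.mem_coe, LinearMap.mem_ker]
        have h5 := hcoord ⟨i, hi⟩ j (by omega)
        rw [if_neg] at h5
        · exact h5
        · intro hcon
          have h6 := congrArg (fun q : Fin (e+1) × Fin p => ((q.2 : Fin p) : ℕ)) hcon
          simp at h6
          omega
      exact LinearMap.mem_ker.mp (hle hy)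
    have h0 : B.coord (i0, ⟨m, hm⟩) (F x) = 0 := hker _ hFx
    have hFx' : B.coord (i0, ⟨m, hm⟩) (F x) = x i0 := by
      rw [hF, map_sum]
      rw [Finset.sum_eq_single i0]
      · rw [map_smul, smul_eq_mul, hcoord i0 m hm, if_pos rfl, mul_one]
      · intro i _ hi
        rw [map_smul, smul_eq_mul, hcoord i m hm, if_neg, mul_zero]
        intro hcon
        exact hi (congrArg Prod.fst hcon)
      · intro hcon; exact absurd (Finset.mem_univ _) hcon
    exact hFx'.symm.trans h0
  · -- surjectivity modulo D m
    intro y hy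
    induction hy using Submodule.span_induction with
    | mem x hxS =>
      obtain ⟨i, hi, j, hj, rfl⟩ := hxS
      by_cases hjm : j < m
      · exact ⟨0, by rw [map_zero, sub_zero]; exact Submodule.subset_span ⟨i, hi, j, hjm, rfl⟩⟩
      · have hjm' : j = m := by omega
        refine ⟨fun i' => if i' = ⟨i, hi⟩ then 1 else 0, ?_⟩
        have : F (fun i' => if i' = ⟨i, hi⟩ then 1 else 0)
            = Stmt9Aux.ff k b d (e+1) n' i m := by
          rw [hF, Finset.sum_eq_single (⟨i, hi⟩ : Fin (e+1))]
          · rw [if_pos rfl, one_smul]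
          · intro σ _ hσ
            rw [if_neg hσ]
            exact zero_smul (LaurentSeries k) (Stmt9Aux.ff k b d (e+1) n' (σ:ℕ) m)
          · intro hcon; exact absurd (Finset.mem_univ _) hcon
        rw [this, hjm', sub_self]
        exact Submodule.zero_mem _
    | zero => exact ⟨0, by rw [map_zero, sub_zero]; exact Submodule.zero_mem _⟩
    | add x y hx hy ihx ihy =>
      obtain ⟨x1, hx1⟩ := ihx
      obtain ⟨x2, hx2⟩ := ihy
      refine ⟨x1 + x2, ?_⟩
      rw [map_add]
      have hre : x + y - (F x1 + F x2) = (x - F x1) + (y - F x2) := by abel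
      rw [hre]
      exact Submodule.add_mem _ hx1 hx2
    | smul c x hx ih =>
      obtain ⟨x1, hx1⟩ := ih
      refine ⟨c • x1, ?_⟩
      have hre : c • x - F (c • x1) = c • (x - F x1) := by
        rw [LinearMap.map_smul]
        exact (smul_sub c x (F x1)).symm
      rw [hre]
      exact Submodule.smul_mem _ _ hx1
end

section
/- Let G ‚ąą M_d(k[[u]]) with det G of u-adic valuation ő≥, and let N > bő≥/(b‚ąí1) be an integer. If H ‚ąą M_d(k[[u]]) satisfies H ‚Č° G (mod u^N), then there exists P ‚ąą GL_d(k[[u]]) with P G ŌÜ(P)^{‚ąí1} = H, where ŌÜ acts entrywise on matrices over K = k((u)). -/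
/-- Let `G ∈ M_d(k[[u]])` with `det G` of `u`-adic valuation `γ`, and let
`N > bγ/(b-1)`.  If `H ∈ M_d(k[[u]])` is congruent to `G` modulo `u^N`, then there is
a matrix `P`, invertible over `k[[u]]`, with `P G φ(P)⁻¹ = H` (equivalently
`P G = H φ(P)`), where `φ` acts entrywise. -/
theorem stmt11 (k : Type*) [Field k] (σ : k ≃+* k) (b : ℕ) (hb : 1 < b)
    (φ : PowerSeries k →+* PowerSeries k)
    (hφ1 : ∀ (f : PowerSeries k) (m : ℕ),
      PowerSeries.coeff (R := k) (b * m) (φ f) = σ (PowerSeries.coeff (R := k) m f))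
    (hφ2 : ∀ (f : PowerSeries k) (m : ℕ), ¬ (b ∣ m) →
      PowerSeries.coeff (R := k) m (φ f) = 0)
    (d : ℕ) (G H : Matrix (Fin d) (Fin d) (PowerSeries k))
    (γ : ℕ) (hγ : G.det.order = (γ : ℕ∞))
    (N : ℕ) (hN : N * (b - 1) > b * γ)
    (hcong : ∀ (i j : Fin d) (m : ℕ), m < N →
      PowerSeries.coeff (R := k) m (H i j) = PowerSeries.coeff (R := k) m (G i j)) :
    ∃ P : Matrix (Fin d) (Fin d) (PowerSeries k),
      IsUnit P ∧ P * G = H * P.map φ := by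
  classical
  set X : PowerSeries k := PowerSeries.X with hXdef
  -- φ multiplies X-adic valuations by b
  have hφdvd : ∀ (f : PowerSeries k) (n : ℕ), X ^ n ∣ f → X ^ (b * n) ∣ φ f := by
    intro f n hf
    rw [PowerSeries.X_pow_dvd_iff] at hf ⊢
    intro m hm
    by_cases hbm : b ∣ m
    · obtain ⟨m', rfl⟩ := hbm
      rw [hφ1]
      have hm' : m' < n := by
        by_contra h
        push_neg at h
        exact absurd hm (not_lt.2 (Nat.mul_le_mul_left b h))
      rw [hf _ hm', map_zero]
    · exact hφ2 f m hbm
  -- arithmetic preliminaries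
  have hbx : ∀ x : ℕ, b * x = (b - 1) * x + x := by
    intro x
    cases b with
    | zero => omega
    | succ n => simp [Nat.succ_sub_one, Nat.succ_mul]
  have hγN : γ < N := by
    by_contra h
    push_neg at h
    have h1 : N * (b - 1) ≤ γ * (b - 1) := Nat.mul_le_mul_right _ h
    have h2 : γ * (b - 1) ≤ b * γ := by
      have := hbx γ
      nlinarith [Nat.sub_le b 1]
    omega
  -- the sequence of valuations
  let v : ℕ → ℕ := fun n => Nat.rec (N - γ) (fun _ vi => b * vi - γ) n
  have v0 : v 0 = N - γ := rfl
  have vsucc : ∀ n, v (n + 1) = b * v n - γ := fun _ => rfl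
  have hv1 : ∀ i, γ + 1 ≤ (b - 1) * v i := by
    intro i
    induction i with
    | zero =>
      rw [v0]
      have hsplit : N = γ + (N - γ) := by omega
      have hNb : (γ + (N - γ)) * (b - 1) > ((b-1) + 1) * γ := by
        rw [← hsplit]
        have : b = (b - 1) + 1 := by omega
        rw [← this]
        exact hN
      nlinarith
    | succ n ih =>
      have h1 := hbx (v n)
      have h2 : v n ≤ v (n + 1) := by rw [vsucc]; omega
      calc γ + 1 ≤ (b - 1) * v n := ih
        _ ≤ (b - 1) * v (n + 1) := Nat.mul_le_mul_left _ h2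
  have hvstep : ∀ i, v i + 1 ≤ v (i + 1) := by
    intro i
    have h1 := hbx (v i)
    have h2 := hv1 i
    rw [vsucc]
    omega
  have hvmono : Monotone v := monotone_nat_of_le_succ (fun n => by have := hvstep n; omega)
  have hvge : ∀ i, i + 1 ≤ v i := by
    intro i
    induction i with
    | zero =>
      have := hv1 0
      rcases Nat.eq_zero_or_pos (v 0) with h | h
      · rw [h] at this; omega
      · omega
    | succ n ih => have := hvstep n; omega
  have hγbv : ∀ i, γ + v (i + 1) = b * v i := by
    intro i
    have h1 := hbx (v i)
    have h2 := hv1 i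
    rw [vsucc]
    omega
  have hγlebv : ∀ i, γ ≤ b * v i := by
    intro i
    have := hγbv i
    omega
  -- det G = X^γ * (unit)
  have hγ' : G.det.order = (γ : ℕ∞) := by
    exact hγ
  rw [PowerSeries.order_eq_nat] at hγ'
  obtain ⟨hγ1, hγ2⟩ := hγ'
  have hdetdvd : X ^ γ ∣ G.det :=
    PowerSeries.X_pow_dvd_iff.mpr (fun m hm => hγ2 m hm)
  obtain ⟨e, he⟩ := hdetdvd
  have he0 : PowerSeries.constantCoeff (R := k) e ≠ 0 := by
    intro h
    apply hγ1
    rw [he]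
    have : PowerSeries.coeff (R := k) (0 + γ) (X ^ γ * e) = PowerSeries.coeff (R := k) 0 e :=
      PowerSeries.coeff_X_pow_mul e γ 0
    simpa [PowerSeries.coeff_zero_eq_constantCoeff, h] using this
  have heu : IsUnit e := PowerSeries.isUnit_iff_constantCoeff.mpr (Ne.isUnit he0)
  obtain ⟨ue, hue⟩ := heu
  set einv : PowerSeries k := ((ue⁻¹ : (PowerSeries k)ˣ) : PowerSeries k) with heinv
  have hee : e * einv = 1 := by
    rw [← hue, heinv, ← Units.val_mul, mul_inv_cancel, Units.val_one]
  -- the "quasi-inverse" Q of G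
  set Q : Matrix (Fin d) (Fin d) (PowerSeries k) := einv • G.adjugate with hQdef
  have hGQ : G * Q = (X ^ γ) • (1 : Matrix (Fin d) (Fin d) (PowerSeries k)) := by
    rw [hQdef, Matrix.mul_smul, Matrix.mul_adjugate, he, smul_smul]
    congr 1
    rw [show einv * (X ^ γ * e) = X ^ γ * (e * einv) by ring, hee, mul_one]
  have hQG : Q * G = (X ^ γ) • (1 : Matrix (Fin d) (Fin d) (PowerSeries k)) := by
    rw [hQdef, Matrix.smul_mul, Matrix.adjugate_mul, he, smul_smul]
    congr 1
    rw [show einv * (X ^ γ * e) = X ^ γ * (e * einv) by ring, hee, mul_one]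
  -- division by X^γ
  let dv : PowerSeries k → PowerSeries k := fun f => if h : X ^ γ ∣ f then h.choose else 0
  have hdv : ∀ f, X ^ γ ∣ f → X ^ γ * dv f = f := by
    intro f h
    simp only [dv, dif_pos h]
    exact h.choose_spec.symm
  -- the approximating sequence
  let Pseq : ℕ → Matrix (Fin d) (Fin d) (PowerSeries k) :=
    fun n => Nat.rec 1 (fun _ Pi => (H * Pi.map φ * Q).map dv) n
  have Pseq0 : Pseq 0 = 1 := rfl
  have Pseqs : ∀ n, Pseq (n + 1) = (H * (Pseq n).map φ * Q).map dv := fun _ => rfl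
  -- entrywise divisibility helpers
  have hmull : ∀ (n : ℕ) (A B : Matrix (Fin d) (Fin d) (PowerSeries k)),
      (∀ i j, X ^ n ∣ A i j) → ∀ i j, X ^ n ∣ (B * A) i j := by
    intro n A B hA i j
    rw [Matrix.mul_apply]
    exact Finset.dvd_sum (fun l _ => (hA l j).mul_left _)
  have hmulr : ∀ (n : ℕ) (A B : Matrix (Fin d) (Fin d) (PowerSeries k)),
      (∀ i j, X ^ n ∣ A i j) → ∀ i j, X ^ n ∣ (A * B) i j := by
    intro n A B hA i j
    rw [Matrix.mul_apply]
    exact Finset.dvd_sum (fun l _ => (hA i l).mul_right _)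
  have hφmat : ∀ (n : ℕ) (A : Matrix (Fin d) (Fin d) (PowerSeries k)),
      (∀ i j, X ^ n ∣ A i j) → ∀ i j, X ^ (b * n) ∣ (A.map φ) i j := by
    intro n A hA i j
    rw [Matrix.map_apply]
    exact hφdvd _ _ (hA i j)
  have hHG : ∀ i j, X ^ N ∣ (H - G) i j := by
    intro i j
    rw [PowerSeries.X_pow_dvd_iff]
    intro m hm
    simp [Matrix.sub_apply, hcong i j m hm]
  -- cancellation of X^γ
  have hXne : (X : PowerSeries k) ^ γ ≠ 0 := pow_ne_zero _ PowerSeries.X_ne_zero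
  have hcancel : ∀ (t : ℕ) (g f : PowerSeries k), X ^ γ * g = f → X ^ (γ + t) ∣ f → X ^ t ∣ g := by
    intro t g f hgf hf
    obtain ⟨c, hc⟩ := hf
    refine ⟨c, mul_left_cancel₀ hXne ?_⟩
    rw [hgf, hc, pow_add]
    ring
  -- one division step
  have hstep : ∀ i, (∀ a c, X ^ γ ∣ (H * (Pseq i).map φ * Q) a c) →
      ∀ a c, X ^ γ * (Pseq (i + 1) a c) = (H * (Pseq i).map φ * Q) a c := by
    intro i hA a c
    rw [Pseqs, Matrix.map_apply]
    exact hdv _ (hA a c)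
  -- the main induction
  have key : ∀ i, (∀ a c, X ^ γ ∣ (H * (Pseq i).map φ * Q) a c) ∧
      (∀ a c, X ^ (v i) ∣ (Pseq (i + 1) - Pseq i) a c) := by
    intro i
    induction i with
    | zero =>
      have hmap1 : (Pseq 0).map φ = 1 := by
        rw [Pseq0]
        exact Matrix.map_one φ (map_zero φ) (map_one φ)
      have hM : H * (Pseq 0).map φ * Q = (H - G) * Q + (X ^ γ) • 1 := by
        rw [hmap1, Matrix.mul_one, ← hGQ, Matrix.sub_mul, sub_add_cancel]
      have hA0 : ∀ a c, X ^ γ ∣ (H * (Pseq 0).map φ * Q) a c := by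
        intro a c
        rw [hM, Matrix.add_apply]
        refine dvd_add ?_ ?_
        · exact (pow_dvd_pow X hγN.le).trans (hmulr N _ Q hHG a c)
        · rw [Matrix.smul_apply, smul_eq_mul]
          exact Dvd.intro _ rfl
      refine ⟨hA0, ?_⟩
      intro a c
      have e1 : X ^ γ * Pseq 1 a c = (H * (Pseq 0).map φ * Q) a c := hstep 0 hA0 a c
      have e3 : X ^ γ * ((Pseq 1 - Pseq 0) a c) = ((H - G) * Q) a c := by
        rw [Matrix.sub_apply, mul_sub, e1, hM, Matrix.add_apply, Pseq0]
        rw [Matrix.smul_apply, smul_eq_mul]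
        ring
      refine hcancel (v 0) _ _ e3 ?_
      have : γ + v 0 = N := by rw [v0]; omega
      rw [this]
      exact hmulr N _ Q hHG a c
    | succ n ih =>
      obtain ⟨ihA, ihB⟩ := ih
      have hdiff : H * (Pseq (n + 1)).map φ * Q - H * (Pseq n).map φ * Q
          = H * ((Pseq (n + 1) - Pseq n).map φ) * Q := by
        rw [Matrix.map_sub φ (fun x y => map_sub φ x y), Matrix.mul_sub, Matrix.sub_mul]
      have hdd : ∀ a c, X ^ (b * v n) ∣ (H * ((Pseq (n + 1) - Pseq n).map φ) * Q) a c :=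
        fun a c => hmulr _ _ Q (hmull _ _ H (hφmat _ _ ihB)) a c
      have hA' : ∀ a c, X ^ γ ∣ (H * (Pseq (n + 1)).map φ * Q) a c := by
        intro a c
        have hsum : (H * (Pseq (n + 1)).map φ * Q) a c
            = (H * (Pseq n).map φ * Q) a c
              + (H * ((Pseq (n + 1) - Pseq n).map φ) * Q) a c := by
          rw [← hdiff, Matrix.sub_apply]
          ring
        rw [hsum]
        exact dvd_add (ihA a c) ((pow_dvd_pow X (hγlebv n)).trans (hdd a c))
      refine ⟨hA', ?_⟩
      intro a c
      have e1 : X ^ γ * Pseq (n + 1) a c = (H * (Pseq n).map φ * Q) a c := hstep n ihA a c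
      have e2 : X ^ γ * Pseq (n + 2) a c = (H * (Pseq (n + 1)).map φ * Q) a c :=
        hstep (n + 1) hA' a c
      have e3 : X ^ γ * ((Pseq (n + 2) - Pseq (n + 1)) a c)
          = (H * ((Pseq (n + 1) - Pseq n).map φ) * Q) a c := by
        rw [← hdiff, Matrix.sub_apply, Matrix.sub_apply, mul_sub, e1, e2]
      refine hcancel (v (n + 1)) _ _ e3 ?_
      rw [hγbv n]
      exact hdd a c
  -- telescoping
  have tele : ∀ n m, n ≤ m → ∀ a c, X ^ (v n) ∣ (Pseq m - Pseq n) a c := by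
    intro n m hnm
    induction m, hnm using Nat.le_induction with
    | base => intro a c; simp [Matrix.sub_apply, sub_self]
    | succ m hm ih =>
      intro a c
      have h1 : Pseq (m + 1) - Pseq n = (Pseq (m + 1) - Pseq m) + (Pseq m - Pseq n) := by abel
      rw [h1, Matrix.add_apply]
      exact dvd_add ((pow_dvd_pow X (hvmono hm)).trans ((key m).2 a c)) (ih a c)
  -- the limit matrix
  set P : Matrix (Fin d) (Fin d) (PowerSeries k) :=
    Matrix.of fun a c => PowerSeries.mk fun m => PowerSeries.coeff (R := k) m (Pseq (m + 1) a c)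
    with hPdef
  have hPcoeff : ∀ m a c, PowerSeries.coeff (R := k) m (P a c)
      = PowerSeries.coeff (R := k) m (Pseq (m + 1) a c) := by
    intro m a c
    rw [hPdef]
    simp [PowerSeries.coeff_mk]
  have hclose : ∀ n a c, X ^ (n + 1) ∣ (P - Pseq n) a c := by
    intro n a c
    rw [PowerSeries.X_pow_dvd_iff]
    intro m hm
    rw [Matrix.sub_apply, map_sub, hPcoeff, sub_eq_zero]
    rcases le_total (m + 1) n with h | h
    · have hd := tele (m + 1) n h a c
      have hm' : m < v (m + 1) := lt_of_lt_of_le (by omega) (hvge (m + 1))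
      have := PowerSeries.X_pow_dvd_iff.mp hd m hm'
      rw [Matrix.sub_apply, map_sub, sub_eq_zero] at this
      exact this.symm
    · have hd := tele n (m + 1) h a c
      have hm' : m < v n := lt_of_lt_of_le (by omega) (hvge n)
      have := PowerSeries.X_pow_dvd_iff.mp hd m hm'
      rw [Matrix.sub_apply, map_sub, sub_eq_zero] at this
      exact this
  -- the approximants satisfy the twisted equation exactly at each stage
  have hPG : ∀ n, Pseq (n + 1) * G = H * (Pseq n).map φ := by
    intro n
    have hsm : (X ^ γ) • Pseq (n + 1) = H * (Pseq n).map φ * Q := by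
      refine Matrix.ext fun a c => ?_
      rw [Matrix.smul_apply, smul_eq_mul]
      exact hstep n (key n).1 a c
    have h1 : (X ^ γ) • (Pseq (n + 1) * G) = (X ^ γ) • (H * (Pseq n).map φ) := by
      calc (X ^ γ) • (Pseq (n + 1) * G) = ((X ^ γ) • Pseq (n + 1)) * G := by
            rw [Matrix.smul_mul]
        _ = H * (Pseq n).map φ * Q * G := by rw [hsm]
        _ = H * (Pseq n).map φ * ((X ^ γ) • 1) := by rw [Matrix.mul_assoc, hQG]
        _ = (X ^ γ) • (H * (Pseq n).map φ) := by rw [Matrix.mul_smul, Matrix.mul_one]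
    refine Matrix.ext fun a c => ?_
    have := congrFun (congrFun h1 a) c
    rw [Matrix.smul_apply, Matrix.smul_apply, smul_eq_mul, smul_eq_mul] at this
    exact mul_left_cancel₀ hXne this
  -- P satisfies the equation
  have heq : P * G = H * P.map φ := by
    rw [← sub_eq_zero]
    refine Matrix.ext fun a c => ?_
    rw [Matrix.zero_apply]
    refine PowerSeries.ext fun m => ?_
    rw [map_zero]
    have hid : (P - Pseq (m + 1)) * G - H * ((P - Pseq m).map φ)
        = P * G - H * P.map φ := by
      rw [Matrix.map_sub φ (fun x y => map_sub φ x y), Matrix.sub_mul, Matrix.mul_sub,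
        hPG m]
      abel
    rw [← hid]
    have h1 : X ^ (m + 2) ∣ ((P - Pseq (m + 1)) * G) a c :=
      hmulr _ _ G (hclose (m + 1)) a c
    have h2 : X ^ (b * (m + 1)) ∣ (H * ((P - Pseq m).map φ)) a c :=
      hmull _ _ H (hφmat _ _ (hclose m)) a c
    rw [Matrix.sub_apply, map_sub]
    have hc1 : PowerSeries.coeff (R := k) m (((P - Pseq (m + 1)) * G) a c) = 0 :=
      PowerSeries.X_pow_dvd_iff.mp h1 m (by omega)
    have hc2 : PowerSeries.coeff (R := k) m ((H * ((P - Pseq m).map φ)) a c) = 0 :=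
      PowerSeries.X_pow_dvd_iff.mp h2 m (by nlinarith)
    rw [hc1, hc2, sub_zero]
  -- P is invertible
  have hPunit : IsUnit P := by
    rw [Matrix.isUnit_iff_isUnit_det]
    rw [PowerSeries.isUnit_iff_constantCoeff]
    have hmapP : P.map (PowerSeries.constantCoeff (R := k)) = 1 := by
      have h0 : (P - Pseq 0).map (PowerSeries.constantCoeff (R := k)) = 0 := by
        ext a c
        rw [Matrix.map_apply, Matrix.zero_apply, ← PowerSeries.coeff_zero_eq_constantCoeff_apply]
        exact PowerSeries.X_pow_dvd_iff.mp (hclose 0 a c) 0 (by omega)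
      have := Matrix.map_sub (PowerSeries.constantCoeff (R := k))
        (fun x y => map_sub (PowerSeries.constantCoeff (R := k)) x y) P (Pseq 0)
      rw [this, Pseq0,
        Matrix.map_one (PowerSeries.constantCoeff (R := k)) (map_zero _) (map_one _),
        sub_eq_zero] at h0
      exact h0
    have hdet : (PowerSeries.constantCoeff (R := k)) P.det = 1 := by
      have h := RingHom.map_det (PowerSeries.constantCoeff (R := k)) P
      rw [RingHom.mapMatrix_apply, hmapP, Matrix.det_one] at h
      exact h
    rw [hdet]
    exact isUnit_one
  exact ⟨P, hPunit, heq⟩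
end

section
/- Let M be a free k[[u]]-module of rank d with a ŌÜ-semilinear map ŌÜ_M whose matrix G in some basis has det of u-adic valuation ő≥. If x ‚ąą M but x ‚ąČ uM, then ŌÜ_M(x) ‚ąČ u^{ő≥+1} M. -/
/-- Let `M = k[[u]]^d` be free with φ-semilinear map whose matrix `G` (in the standard
basis) has determinant of `u`-adic valuation `γ`.  If `x ∈ M` but `x ∉ uM`, then
`φ_M(x) ∉ u^{γ+1} M`.  In coordinates, `φ_M(x) = G ⬝ (φ ∘ x)`. -/
theorem stmt12 (k : Type*) [Field k] (σ : k ≃+* k) (b : ℕ) (hb : 1 < b)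
    (φ : PowerSeries k →+* PowerSeries k)
    (hφ1 : ∀ (f : PowerSeries k) (m : ℕ),
      PowerSeries.coeff (b * m) (φ f) = σ (PowerSeries.coeff m f))
    (hφ2 : ∀ (f : PowerSeries k) (m : ℕ), ¬ (b ∣ m) →
      PowerSeries.coeff m (φ f) = 0)
    (d : ℕ) (G : Matrix (Fin d) (Fin d) (PowerSeries k))
    (γ : ℕ) (hγ : G.det.order = (γ : ℕ∞))
    (x : Fin d → PowerSeries k)
    (hx : ¬ ∀ i, (PowerSeries.X : PowerSeries k) ∣ x i) :
    ¬ ∀ i, (PowerSeries.X : PowerSeries k) ^ (γ + 1) ∣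
        G.mulVec (fun j => φ (x j)) i := by
  intro h
  push_neg at hx
  obtain ⟨i, hi⟩ := hx
  -- constant coefficient of x i is nonzero
  have hc : PowerSeries.constantCoeff (x i) ≠ 0 := fun h0 =>
    hi (PowerSeries.X_dvd_iff.mpr h0)
  -- constant coefficient of φ (x i) is nonzero
  have hφc : PowerSeries.coeff 0 (φ (x i)) ≠ 0 := by
    have := hφ1 (x i) 0
    rw [mul_zero] at this
    rw [this]
    simpa [PowerSeries.coeff_zero_eq_constantCoeff] using hc
  -- det G * φ (x i) is divisible by X^(γ+1)
  have key : G.det • (fun j => φ (x j)) =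
      (G.adjugate).mulVec (G.mulVec fun j => φ (x j)) := by
    rw [Matrix.mulVec_mulVec, Matrix.adjugate_mul, Matrix.smul_mulVec,
      Matrix.one_mulVec]
  have hdvd : (PowerSeries.X : PowerSeries k) ^ (γ + 1) ∣ G.det * φ (x i) := by
    have : G.det * φ (x i) = (G.adjugate).mulVec (G.mulVec fun j => φ (x j)) i := by
      rw [← key]; rfl
    rw [this, Matrix.mulVec]
    exact Finset.dvd_sum fun j _ => Dvd.dvd.mul_left (h j) _
  -- hence the coefficient of X^γ of det G * φ (x i) vanishes
  have hcoeff : PowerSeries.coeff γ (G.det * φ (x i)) = 0 :=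
    PowerSeries.X_pow_dvd_iff.mp hdvd γ (Nat.lt_succ_self γ)
  -- but it equals (coeff γ det G) * (coeff 0 (φ (x i))) ≠ 0
  have hγ' : G.det.order = (γ : ℕ∞) := by
    exact hγ
  obtain ⟨hne, hlt⟩ := PowerSeries.order_eq_nat.mp hγ'
  rw [PowerSeries.coeff_mul] at hcoeff
  rw [Finset.sum_eq_single (γ, 0)] at hcoeff
  · exact mul_ne_zero hne hφc hcoeff
  · rintro ⟨p, q⟩ hpq hne'
    rw [Finset.HasAntidiagonal.mem_antidiagonal] at hpq
    have : p < γ := by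
      rcases lt_or_eq_of_le (Nat.le.intro hpq) with h' | h'
      · exact h'
      · exfalso; apply hne'; subst h'; simp at hpq; simp [hpq]
    rw [hlt p this, zero_mul]
  · intro hmem
    exact absurd (Finset.HasAntidiagonal.mem_antidiagonal.mpr (by simp)) hmem
end

section
/- (Eigenvector existence / lifting lemma) Let M be a free k[[u]]-module with ŌÜ-semilinear ŌÜ_M, őī ‚Č• 1, n ‚Č• 0 and c > n/(b^őī ‚ąí 1) an integer. If x ‚ąą M satisfies ŌÜ^őī(x) ‚Č° u^n x (mod u^{n+c} M) and x ‚ąČ uM, then there exists z ‚ąą M with z ‚Č° x (mod uM) (in particular z ‚Ȇ 0) and ŌÜ^őī(z) = u^n z. -/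
open PowerSeries

/-- Formal division by `X^n`: shift coefficients down by `n`. -/
noncomputable def psDiv {k : Type*} [CommRing k] (n : ℕ) (f : PowerSeries k) : PowerSeries k :=
  PowerSeries.mk fun m => PowerSeries.coeff (m + n) f

lemma psDiv_spec {k : Type*} [CommRing k] {n : ℕ} {f : PowerSeries k}
    (h : (X : PowerSeries k) ^ n ∣ f) : (X : PowerSeries k) ^ n * psDiv n f = f := by
  ext m
  rcases lt_or_ge m n with hm | hm
  · have h1 : (X : PowerSeries k) ^ n ∣ X ^ n * psDiv n f := dvd_mul_right _ _
    rw [X_pow_dvd_iff] at h h1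
    rw [h1 m hm, h m hm]
  · obtain ⟨e, rfl⟩ := Nat.exists_eq_add_of_le hm
    rw [add_comm n e, coeff_X_pow_mul, psDiv, coeff_mk]

/-- Eigenvector lifting lemma.  Let `M = k[[u]]^d` with a φ-semilinear map `φM`
(additive and satisfying `φM (f • x) = φ(f) • φM x`), `δ ≥ 1`, `n ≥ 0`, and
`c > n/(b^δ - 1)` an integer.  If `x ∈ M \ uM` satisfies
`φ^δ(x) ≡ uⁿ x (mod u^{n+c} M)`, then there exists `z ∈ M` with `z ≡ x (mod uM)`
(in particular `z ≠ 0`) and `φ^δ(z) = uⁿ z`. -/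
theorem stmt13 (k : Type*) [Field k] (σ : k ≃+* k) (b : ℕ) (hb : 1 < b)
    (φ : PowerSeries k →+* PowerSeries k)
    (hφ1 : ∀ (f : PowerSeries k) (m : ℕ),
      PowerSeries.coeff (b * m) (φ f) = σ (PowerSeries.coeff m f))
    (hφ2 : ∀ (f : PowerSeries k) (m : ℕ), ¬ (b ∣ m) →
      PowerSeries.coeff m (φ f) = 0)
    (d : ℕ) (φM : (Fin d → PowerSeries k) → (Fin d → PowerSeries k))
    (hadd : ∀ x y, φM (x + y) = φM x + φM y)
    (hsemi : ∀ (f : PowerSeries k) (x : Fin d → PowerSeries k) (i : Fin d),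
      φM (fun j => f * x j) i = φ f * φM x i)
    (δ n c : ℕ) (hδ : 1 ≤ δ) (hc : c * (b ^ δ - 1) > n)
    (x : Fin d → PowerSeries k)
    (hx : ¬ ∀ i, (PowerSeries.X : PowerSeries k) ∣ x i)
    (hcong : ∀ i, (PowerSeries.X : PowerSeries k) ^ (n + c) ∣
      (φM^[δ] x i - PowerSeries.X ^ n * x i)) :
    ∃ z : Fin d → PowerSeries k,
      (∀ i, (PowerSeries.X : PowerSeries k) ∣ (z i - x i)) ∧ z ≠ 0 ∧
      φM^[δ] z = fun i => PowerSeries.X ^ n * z i := by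
  classical
  -- basic numerology
  have hB2 : 2 ≤ b ^ δ := le_trans hb (Nat.le_self_pow (by omega) b)
  obtain ⟨e, hBe⟩ : ∃ e, b ^ δ = e + 1 := ⟨b ^ δ - 1, by omega⟩
  have he1 : 1 ≤ e := by omega
  have hce : n < c * e := by rwa [hBe, Nat.add_sub_cancel] at hc
  have hc1 : 1 ≤ c := by nlinarith
  have hkey : ∀ j : ℕ, n + (c + j) + 1 ≤ b ^ δ * (c + j) := by
    intro j
    rw [hBe]
    nlinarith
  -- φ sends X to X^b
  have hφX : φ X = (X : PowerSeries k) ^ b := by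
    ext m
    rw [coeff_X_pow]
    by_cases hdvd : b ∣ m
    · obtain ⟨m', rfl⟩ := hdvd
      rw [hφ1, coeff_X]
      by_cases h1 : m' = 1
      · subst h1
        rw [if_pos rfl, map_one, if_pos (mul_one b)]
      · rw [if_neg h1, map_zero, if_neg]
        intro hbm
        exact h1 (Nat.eq_of_mul_eq_mul_left (show 0 < b by omega)
          (by rw [Nat.mul_one]; exact hbm))
    · rw [hφ2 X m hdvd, if_neg]
      rintro rfl
      exact hdvd dvd_rfl
  -- additivity of iterates
  have hadd' : ∀ (e' : ℕ) (a b' : Fin d → PowerSeries k),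
      φM^[e'] (a + b') = φM^[e'] a + φM^[e'] b' := by
    intro e'
    induction e' with
    | zero => intro a b'; simp
    | succ e' ih =>
      intro a b'
      rw [Function.iterate_succ_apply', Function.iterate_succ_apply',
        Function.iterate_succ_apply', ih, hadd]
  -- divisibility amplification
  have hstep : ∀ (m : ℕ) (w : Fin d → PowerSeries k),
      (∀ i, (X : PowerSeries k) ^ m ∣ w i) → ∀ i, (X : PowerSeries k) ^ (b * m) ∣ φM w i := by
    intro m w hw i
    have hw' : w = fun j => (X : PowerSeries k) ^ m * psDiv m (w j) := by
      funext j; exact (psDiv_spec (hw j)).symm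
    rw [hw', hsemi, map_pow, hφX, ← pow_mul]
    exact dvd_mul_right _ _
  have hψdvd : ∀ (e' m : ℕ) (w : Fin d → PowerSeries k),
      (∀ i, (X : PowerSeries k) ^ m ∣ w i) →
      ∀ i, (X : PowerSeries k) ^ (b ^ e' * m) ∣ φM^[e'] w i := by
    intro e'
    induction e' with
    | zero => intro m w hw i; simpa using hw i
    | succ e' ih =>
      intro m w hw i
      rw [Function.iterate_succ_apply']
      have h := hstep (b ^ e' * m) (φM^[e'] w) (ih m w hw) i
      have harith : b ^ (e' + 1) * m = b * (b ^ e' * m) := by ring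
      rwa [harith]
  set ψ := φM^[δ] with hψdef
  -- cancellation of X^n
  have hXn : (X : PowerSeries k) ^ n ≠ 0 := pow_ne_zero n X_ne_zero
  have hcancel : ∀ (m : ℕ) (f g : PowerSeries k),
      (X : PowerSeries k) ^ (n + m) ∣ f → (X : PowerSeries k) ^ n * g = f →
      (X : PowerSeries k) ^ m ∣ g := by
    rintro m f g ⟨q, hq⟩ hg
    refine ⟨q, ?_⟩
    apply mul_left_cancel₀ hXn
    rw [hg, hq, pow_add, mul_assoc]
  -- the successive-approximation sequence
  let r : ℕ → Fin d → PowerSeries k := fun j =>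
    Nat.rec (fun i => psDiv n (ψ x i - X ^ n * x i))
      (fun _ rj => fun i => psDiv n (ψ rj i)) j
  let z : ℕ → Fin d → PowerSeries k := fun j => x + ∑ j' ∈ Finset.range j, r j'
  have hz0 : z 0 = x := by simp [z]
  have hzsucc : ∀ j, z (j + 1) = z j + r j := by
    intro j
    show x + _ = (x + _) + _
    rw [Finset.sum_range_succ, add_assoc]
  -- the main invariant
  have key : ∀ j, (∀ i, (X : PowerSeries k) ^ (c + j) ∣ r j i) ∧
      (∀ i, ψ (z j) i = X ^ n * z j i + X ^ n * r j i) := by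
    intro j
    induction j with
    | zero =>
      have hspec : ∀ i, (X : PowerSeries k) ^ n * r 0 i = ψ x i - X ^ n * x i := by
        intro i
        exact psDiv_spec (dvd_trans (pow_dvd_pow X (Nat.le_add_right n c)) (hcong i))
      constructor
      · intro i
        exact hcancel c _ _ (by simpa using hcong i) (by simpa using hspec i)
      · intro i
        rw [hz0]
        have := hspec i
        linear_combination -this
    | succ j ih =>
      have hd : ∀ i, (X : PowerSeries k) ^ (b ^ δ * (c + j)) ∣ ψ (r j) i :=
        hψdvd δ (c + j) (r j) ih.1
      have hn' : ∀ i, (X : PowerSeries k) ^ (n + (c + (j + 1))) ∣ ψ (r j) i := by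
        intro i
        exact dvd_trans (pow_dvd_pow X (by have := hkey j; omega)) (hd i)
      have hspec : ∀ i, (X : PowerSeries k) ^ n * r (j + 1) i = ψ (r j) i := by
        intro i
        exact psDiv_spec (dvd_trans (pow_dvd_pow X (Nat.le_add_right n _)) (hn' i))
      constructor
      · intro i
        exact hcancel (c + (j + 1)) _ _ (hn' i) (hspec i)
      · intro i
        have e1 : ψ (z (j + 1)) = ψ (z j) + ψ (r j) := by
          rw [hzsucc j]; exact hadd' δ _ _
        have e2 : ψ (z (j + 1)) i = ψ (z j) i + ψ (r j) i := by
          rw [e1]; rfl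
        rw [e2, ih.2 i, ← hspec i, hzsucc j]
        show _ = X ^ n * (z j i + r j i) + _
        ring
  -- agreement of the sequence
  have hz2 : ∀ j1 j2, j1 ≤ j2 → ∀ i, (X : PowerSeries k) ^ (c + j1) ∣ (z j2 i - z j1 i) := by
    intro j1 j2 hle
    induction j2, hle using Nat.le_induction with
    | base => intro i; simp
    | succ j2 hle ih =>
      intro i
      have : z (j2 + 1) i - z j1 i = (z j2 i - z j1 i) + r j2 i := by
        rw [hzsucc j2]
        show (z j2 i + r j2 i) - z j1 i = _
        ring
      rw [this]
      exact dvd_add (ih i)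
        (dvd_trans (pow_dvd_pow X (by omega)) ((key j2).1 i))
  -- the limit
  let L : Fin d → PowerSeries k := fun i => PowerSeries.mk fun m => PowerSeries.coeff m (z m i)
  have hcoeff : ∀ (i : Fin d) (m j1 j2 : ℕ), m < c + j1 → m < c + j2 →
      PowerSeries.coeff m (z j1 i) = PowerSeries.coeff m (z j2 i) := by
    intro i m j1 j2 h1 h2
    have H : ∀ ja jb : ℕ, ja ≤ jb → m < c + ja →
        PowerSeries.coeff m (z ja i) = PowerSeries.coeff m (z jb i) := by
      intro ja jb hle hma
      have hdvd := hz2 ja jb hle i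
      rw [X_pow_dvd_iff] at hdvd
      have := hdvd m hma
      rw [map_sub] at this
      linear_combination -this
    rcases le_total j1 j2 with h | h
    · exact H j1 j2 h h1
    · exact (H j2 j1 h h2).symm
  have hLz : ∀ j i, (X : PowerSeries k) ^ (c + j) ∣ (L i - z j i) := by
    intro j i
    rw [X_pow_dvd_iff]
    intro m hm
    rw [map_sub]
    have h1 : PowerSeries.coeff m (L i) = PowerSeries.coeff m (z m i) := coeff_mk m _
    rw [h1, hcoeff i m m j (by omega) hm, sub_self]
  -- the fixed-point equation
  have hfinal : ∀ i, ψ L i = X ^ n * L i := by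
    intro i
    have hz' : ∀ j : ℕ, (X : PowerSeries k) ^ (c + j) ∣ (ψ L i - X ^ n * L i) := by
      intro j
      have hdecomp : ψ L = ψ (z j) + ψ (L - z j) := by
        have h' : z j + (L - z j) = L := by abel
        rw [← hadd' δ, h', hψdef]
      have e2 : ψ L i = ψ (z j) i + ψ (L - z j) i := by rw [hdecomp]; rfl
      have e3 : ψ L i - X ^ n * L i =
          X ^ n * (z j i - L i) + X ^ n * r j i + ψ (L - z j) i := by
        rw [e2, (key j).2 i]
        ring
      rw [e3]
      refine dvd_add (dvd_add ?_ ?_) ?_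
      · exact Dvd.dvd.mul_left (dvd_sub_comm.mp (hLz j i)) _
      · exact Dvd.dvd.mul_left ((key j).1 i) _
      · have hd := hψdvd δ (c + j) (L - z j) (fun i' => by
          have := hLz j i'
          simpa using this) i
        exact dvd_trans (pow_dvd_pow X (Nat.le_mul_of_pos_left _ (by positivity))) hd
    have hzero : ψ L i - X ^ n * L i = 0 := by
      ext m
      have := hz' (m + 1)
      rw [X_pow_dvd_iff] at this
      rw [this m (by omega), map_zero]
    linear_combination hzero
  -- conclusion
  have hLx : ∀ i, (X : PowerSeries k) ∣ (L i - x i) := by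
    intro i
    have := hLz 0 i
    rw [hz0] at this
    exact dvd_trans (dvd_pow_self X (by omega)) this
  refine ⟨L, hLx, ?_, ?_⟩
  · intro h0
    push_neg at hx
    obtain ⟨i, hi⟩ := hx
    apply hi
    have h := hLx i
    rw [h0] at h
    simp only [Pi.zero_apply, zero_sub] at h
    exact dvd_neg.mp h
  · funext i
    exact hfinal i
end

section
/- The ŌÜ-module D(r) := D(‚Ąď(r), n) for n ‚ąą N(r) is a simple object of Mod^ŌÜ_{/K}: any nonzero ŌÜ-stable K-subspace of D(r) equals D(r). -/
section Aux

set_option linter.unusedSectionVars false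

variable {k : Type*} [Field k]

private lemma smc (a : ℤ) (c : k) (x : LaurentSeries k) (m : ℤ) :
    (HahnSeries.single a c * x).coeff m = c * x.coeff (m - a) := by
  have h := HahnSeries.coeff_single_mul_add (r := c) (x := x) (a := m - a) (b := a)
  rwa [sub_add_cancel] at h

variable (σ : k ≃+* k) (φ : LaurentSeries k →+* LaurentSeries k) (b : ℕ) (hb : 1 < b)
  (hφ1 : ∀ (f : LaurentSeries k) (m : ℤ), (φ f).coeff ((b : ℤ) * m) = σ (f.coeff m))
  (hφ2 : ∀ (f : LaurentSeries k) (m : ℤ), ¬ ((b : ℤ) ∣ m) → (φ f).coeff m = 0)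

include hφ1 hφ2 in
private lemma phi_single_s15 (a : ℤ) (f : LaurentSeries k) :
    φ (HahnSeries.single a 1 * f) = HahnSeries.single ((b : ℤ) * a) 1 * φ f := by
  ext m
  rw [smc, one_mul]
  by_cases hdvd : (b : ℤ) ∣ m
  · obtain ⟨m', rfl⟩ := hdvd
    rw [hφ1, smc, one_mul, ← mul_sub, hφ1]
  · rw [hφ2 _ _ hdvd, hφ2]
    intro ⟨e, he⟩
    exact hdvd ⟨e + a, by linarith⟩

include hb hφ1 hφ2 in
private lemma phi_ne_and_order (f : LaurentSeries k) (hf : f ≠ 0) :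
    φ f ≠ 0 ∧ (φ f).order = (b : ℤ) * f.order := by
  have hco : (φ f).coeff ((b : ℤ) * f.order) = σ (f.coeff f.order) := hφ1 f f.order
  have hne : σ (f.coeff f.order) ≠ 0 := by
    intro h
    exact (HahnSeries.coeff_order_eq_zero.not.mpr hf) (by simpa using σ.injective (h.trans (map_zero σ).symm))
  have hfne : φ f ≠ 0 := HahnSeries.ne_zero_of_coeff_ne_zero (hco ▸ hne)
  refine ⟨hfne, ?_⟩
  have hle : (φ f).order ≤ (b : ℤ) * f.order :=
    HahnSeries.order_le_of_coeff_ne_zero (by rw [hco]; exact hne)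
  rcases lt_or_eq_of_le hle with hlt | heq
  · exfalso
    apply (HahnSeries.coeff_order_eq_zero.not.mpr hfne)
    by_cases hdvd : (b : ℤ) ∣ (φ f).order
    · obtain ⟨m', hm'⟩ := hdvd
      rw [hm', hφ1]
      have hb0 : (0 : ℤ) < (b : ℤ) := by
        exact_mod_cast Nat.lt_of_lt_of_le Nat.zero_lt_one hb.le
      have : m' < f.order := by
        rw [hm'] at hlt
        exact lt_of_mul_lt_mul_left hlt (le_of_lt hb0)
      rw [HahnSeries.coeff_eq_zero_of_lt_order this, map_zero]
    · exact hφ2 _ _ hdvd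
  · exact heq

private lemma iter_phi_zero (t : ℕ) : (⇑φ)^[t] (0 : LaurentSeries k) = 0 := by
  induction t with
  | zero => rfl
  | succ t IH => rw [Function.iterate_succ_apply', IH, map_zero]

include hb hφ1 hφ2 in
private lemma iter_phi_ne_and_order (t : ℕ) (f : LaurentSeries k) (hf : f ≠ 0) :
    (⇑φ)^[t] f ≠ 0 ∧ ((⇑φ)^[t] f).order = (b : ℤ) ^ t * f.order := by
  induction t with
  | zero => simpa using hf
  | succ t IH =>
    obtain ⟨h1, h2⟩ := IH
    obtain ⟨h3, h4⟩ := phi_ne_and_order σ φ b hb hφ1 hφ2 _ h1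
    refine ⟨by rwa [Function.iterate_succ_apply'], ?_⟩
    rw [Function.iterate_succ_apply', h4, h2, pow_succ]
    ring

include hφ1 hφ2 in
private lemma dphi_iter (d n : ℕ) (hd : 0 < d) (x : Fin d → LaurentSeries k) :
    ∀ t, t ≤ d → ∀ j : Fin d,
      (Dphi φ d n 1)^[t] x j
        = (if (j : ℕ) < t then HahnSeries.single ((n : ℤ) * (b : ℤ) ^ (j : ℕ)) 1 else 1)
            * (⇑φ)^[t] (x ⟨((j : ℕ) + d - t) % d, Nat.mod_lt _ hd⟩) := by
  intro t
  induction t with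
  | zero =>
    intro _ j
    have hidx : ((j : ℕ) + d - 0) % d = (j : ℕ) := by
      rw [Nat.sub_zero, Nat.add_mod_right, Nat.mod_eq_of_lt j.isLt]
    simp only [Function.iterate_zero_apply, Nat.not_lt_zero, if_false, one_mul, hidx, Fin.eta]
  | succ t IH =>
    intro hst j
    rw [Function.iterate_succ_apply']
    show Dphi φ d n 1 ((Dphi φ d n 1)^[t] x) j = _
    rw [Dphi]
    by_cases hj : (j : ℕ) = 0
    · rw [if_pos hj]
      rw [IH (by omega) ⟨d - 1, by omega⟩]
      simp only [Fin.val_mk]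
      rw [if_neg (show ¬ (d - 1 < t) by omega)]
      rw [one_mul, if_pos (show (j : ℕ) < t + 1 by omega), Function.iterate_succ_apply']
      have hidx : (d - 1 + d - t) % d = ((j : ℕ) + d - (t + 1)) % d := by
        have h1 : d - 1 + d - t = d + (d - (t + 1)) := by omega
        have h2 : (j : ℕ) + d - (t + 1) = d - (t + 1) := by omega
        rw [h1, h2, Nat.add_mod_left]
      have hexp : (n : ℤ) = (n : ℤ) * (b : ℤ) ^ (j : ℕ) := by
        rw [hj, pow_zero, mul_one]
      rw [show (⟨(d - 1 + d - t) % d, Nat.mod_lt _ hd⟩ : Fin d)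
            = ⟨((j : ℕ) + d - (t + 1)) % d, Nat.mod_lt _ hd⟩ from Fin.ext hidx]
      rw [← hexp]
    · rw [if_neg hj]
      rw [IH (by omega) ⟨(j : ℕ) - 1, by omega⟩]
      simp only [Fin.val_mk]
      have hidx : ((j : ℕ) - 1 + d - t) % d = ((j : ℕ) + d - (t + 1)) % d := by
        congr 1
        omega
      rw [show (⟨((j : ℕ) - 1 + d - t) % d, Nat.mod_lt _ hd⟩ : Fin d)
            = ⟨((j : ℕ) + d - (t + 1)) % d, Nat.mod_lt _ hd⟩ from Fin.ext hidx]
      by_cases hjt : (j : ℕ) - 1 < t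
      · rw [if_pos hjt, phi_single_s15 σ φ b hφ1 hφ2]
        rw [if_pos (show (j : ℕ) < t + 1 by omega), Function.iterate_succ_apply']
        have hexp : (b : ℤ) * ((n : ℤ) * (b : ℤ) ^ ((j : ℕ) - 1))
            = (n : ℤ) * (b : ℤ) ^ (j : ℕ) := by
          conv_rhs => rw [show (j : ℕ) = ((j : ℕ) - 1) + 1 by omega]
          rw [pow_succ]
          ring
        rw [hexp]
      · rw [if_neg hjt, one_mul]
        rw [if_neg (show ¬ ((j : ℕ) < t + 1) by omega), one_mul,
          Function.iterate_succ_apply']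

include hφ1 hφ2 in
private lemma dphi_iter_d (d n : ℕ) (hd : 0 < d) (x : Fin d → LaurentSeries k) (j : Fin d) :
    (Dphi φ d n 1)^[d] x j
      = HahnSeries.single ((n : ℤ) * (b : ℤ) ^ (j : ℕ)) 1 * (⇑φ)^[d] (x j) := by
  rw [dphi_iter σ φ b hφ1 hφ2 d n hd x d le_rfl j, if_pos j.isLt]
  have hidx : (⟨((j : ℕ) + d - d) % d, Nat.mod_lt _ hd⟩ : Fin d) = j :=
    Fin.ext (by simp only [Fin.val_mk]; rw [Nat.add_sub_cancel, Nat.mod_eq_of_lt j.isLt])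
  rw [hidx]

private lemma dphi_single_vec (d n : ℕ) (hd : 0 < d) (i : Fin d) (c : LaurentSeries k) :
    Dphi φ d n 1 (fun j => if j = i then c else 0)
      = fun j => if j = (⟨((i : ℕ) + 1) % d, Nat.mod_lt _ hd⟩ : Fin d) then
          (if (i : ℕ) + 1 = d then HahnSeries.single (n : ℤ) 1 * φ c else φ c) else 0 := by
  funext j
  rw [Dphi]
  by_cases hj : (j : ℕ) = 0
  · rw [if_pos hj]
    by_cases hi : (i : ℕ) + 1 = d
    · have h1 : (⟨d - 1, by omega⟩ : Fin d) = i := Fin.ext (by simp only [Fin.val_mk]; omega)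
      have h2 : j = (⟨((i : ℕ) + 1) % d, Nat.mod_lt _ hd⟩ : Fin d) :=
        Fin.ext (by simp only [Fin.val_mk, hi, Nat.mod_self]; omega)
      rw [if_pos h1, if_pos h2, if_pos hi]
    · have h1 : (⟨d - 1, by omega⟩ : Fin d) ≠ i := by
        intro h
        have := congrArg Fin.val h
        simp only [Fin.val_mk] at this
        omega
      have h2 : j ≠ (⟨((i : ℕ) + 1) % d, Nat.mod_lt _ hd⟩ : Fin d) := by
        intro h
        have := congrArg Fin.val h
        simp only [Fin.val_mk] at this
        rw [Nat.mod_eq_of_lt (by omega)] at this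
        omega
      rw [if_neg h1, if_neg h2, map_zero, mul_zero]
  · rw [if_neg hj]
    by_cases h1 : (⟨(j : ℕ) - 1, by omega⟩ : Fin d) = i
    · have hvi : (i : ℕ) = (j : ℕ) - 1 := by
        have := congrArg Fin.val h1
        simpa using this.symm
      have hi : ¬ ((i : ℕ) + 1 = d) := by omega
      have h2 : j = (⟨((i : ℕ) + 1) % d, Nat.mod_lt _ hd⟩ : Fin d) :=
        Fin.ext (by simp only [Fin.val_mk]; rw [Nat.mod_eq_of_lt (by omega)]; omega)
      rw [if_pos h1, if_pos h2, if_neg hi]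
    · have h2 : j ≠ (⟨((i : ℕ) + 1) % d, Nat.mod_lt _ hd⟩ : Fin d) := by
        intro h
        apply h1
        have := congrArg Fin.val h
        simp only [Fin.val_mk] at this
        apply Fin.ext
        simp only [Fin.val_mk]
        by_cases hi : (i : ℕ) + 1 = d
        · rw [hi, Nat.mod_self] at this
          omega
        · rw [Nat.mod_eq_of_lt (by omega)] at this
          omega
      rw [if_neg h1, if_neg h2, map_zero]

end Aux

private lemma arith (b : ℕ) (hb : 1 < b) (r : ℚ) (hden : r.den.Coprime b) (n : ℕ)
    (hn : ∃ m : ℤ,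
      (n : ℚ) / ((b : ℚ) ^ (orderOf (b : ZMod r.den)) - 1) - r = (m : ℚ))
    (i j : ℕ) (hij : i < j) (hjd : j < orderOf (b : ZMod r.den)) :
    ¬ (((b : ℤ) ^ (orderOf (b : ZMod r.den)) - 1) ∣ (n : ℤ) * ((b : ℤ) ^ j - (b : ℤ) ^ i)) := by
  set d := orderOf (b : ZMod r.den) with hd
  rintro ⟨c, hc⟩
  obtain ⟨m, hm⟩ := hn
  have hd2 : 2 ≤ d := by omega
  have hB1 : (1 : ℚ) < (b : ℚ) ^ d := by
    apply one_lt_pow₀ (by exact_mod_cast hb) (by omega)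
  have hBne : ((b : ℚ) ^ d - 1) ≠ 0 := sub_ne_zero.mpr (ne_of_gt hB1)
  have hnq : (n : ℚ) = (r + m) * ((b : ℚ) ^ d - 1) := by
    field_simp at hm
    linarith [hm]
  have hcq : (n : ℚ) * ((b : ℚ) ^ j - (b : ℚ) ^ i) = ((b : ℚ) ^ d - 1) * (c : ℚ) := by
    exact_mod_cast congrArg (fun z : ℤ => (z : ℚ)) hc
  have h2 : (r + m) * ((b : ℚ) ^ j - (b : ℚ) ^ i) = (c : ℚ) := by
    apply mul_left_cancel₀ hBne
    rw [hnq] at hcq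
    linear_combination hcq
  set Tz : ℤ := (b : ℤ) ^ j - (b : ℤ) ^ i with hTz
  set c2 : ℤ := c - m * Tz with hc2
  have hrT : r * (Tz : ℚ) = (c2 : ℚ) := by
    rw [hc2, hTz]
    push_cast
    linear_combination h2
  have hdenne : ((r.den : ℚ)) ≠ 0 := by
    exact_mod_cast r.den_nz
  have hZq : (r.num : ℚ) * (Tz : ℚ) = (c2 : ℚ) * (r.den : ℚ) := by
    rw [← Rat.num_div_den r] at hrT
    field_simp at hrT
    linear_combination hrT
  have hZ : r.num * Tz = c2 * (r.den : ℤ) := by exact_mod_cast hZq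
  have hdvd1 : (r.den : ℤ) ∣ r.num * Tz := ⟨c2, by linear_combination hZ⟩
  have hcop : IsCoprime (r.den : ℤ) r.num := by
    rw [Int.isCoprime_iff_gcd_eq_one]
    simpa [Int.gcd, Nat.coprime_comm] using r.reduced.symm
  have hdvd2 : (r.den : ℤ) ∣ Tz := hcop.dvd_of_dvd_mul_left hdvd1
  have hTfac : Tz = (b : ℤ) ^ i * ((b : ℤ) ^ (j - i) - 1) := by
    have hji : j = i + (j - i) := by omega
    rw [hTz]
    conv_lhs => rw [hji, pow_add]
    ring
  have hcopb : IsCoprime (r.den : ℤ) ((b : ℤ) ^ i) := by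
    apply IsCoprime.pow_right
    rw [Int.isCoprime_iff_gcd_eq_one]
    simpa [Int.gcd] using hden
  have hdvd3 : (r.den : ℤ) ∣ ((b : ℤ) ^ (j - i) - 1) := by
    refine hcopb.dvd_of_dvd_mul_left ?_
    rwa [← hTfac]
  have hz : ((b : ZMod r.den)) ^ (j - i) = 1 := by
    have h0 : ((((b : ℤ) ^ (j - i) - 1 : ℤ)) : ZMod r.den) = 0 :=
      (ZMod.intCast_zmod_eq_zero_iff_dvd _ _).mpr hdvd3
    push_cast at h0
    linear_combination h0
  have hdd : d ∣ (j - i) := orderOf_dvd_of_pow_eq_one hz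
  have := Nat.le_of_dvd (by omega) hdd
  omega



private lemma simple_aux {k : Type*} [Field k] (σ : k ≃+* k)
    (φ : LaurentSeries k →+* LaurentSeries k) (b : ℕ) (hb : 1 < b)
    (hφ1 : ∀ (f : LaurentSeries k) (m : ℤ), (φ f).coeff ((b : ℤ) * m) = σ (f.coeff m))
    (hφ2 : ∀ (f : LaurentSeries k) (m : ℤ), ¬ ((b : ℤ) ∣ m) → (φ f).coeff m = 0)
    (d n : ℕ)
    (harith : ∀ i j : ℕ, i < j → j < d →
      ¬ (((b : ℤ) ^ d - 1) ∣ (n : ℤ) * ((b : ℤ) ^ j - (b : ℤ) ^ i)))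
    (W : Submodule (LaurentSeries k) (Fin d → LaurentSeries k))
    (hW : ∀ x ∈ W, Dphi φ d n 1 x ∈ W) :
    W = ⊥ ∨ W = ⊤ := by
  by_cases hW0 : W = ⊥
  · exact Or.inl hW0
  right
  rcases Nat.eq_zero_or_pos d with hd0 | hd
  · exfalso
    apply hW0
    rw [Submodule.eq_bot_iff]
    intro x _
    funext i
    exact absurd i.isLt (by omega)
  classical
  obtain ⟨x0, hx0W, hx00⟩ := (Submodule.ne_bot_iff W).mp hW0
  have hP : ∃ c : ℕ, ∃ x, x ∈ W ∧ x ≠ 0 ∧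
      (Finset.univ.filter (fun i => x i ≠ 0)).card = c := ⟨_, x0, hx0W, hx00, rfl⟩
  obtain ⟨x, hxW, hx0, hxcard⟩ := Nat.find_spec hP
  have hmin : ∀ z, z ∈ W → z ≠ 0 →
      Nat.find hP ≤ (Finset.univ.filter (fun i => z i ≠ 0)).card :=
    fun z h1 h2 => Nat.find_min' hP ⟨z, h1, h2, rfl⟩
  have hWiter : ∀ t, ∀ y, y ∈ W → (Dphi φ d n 1)^[t] y ∈ W := by
    intro t
    induction t with
    | zero => intro y hy; exact hy
    | succ t IH => intro y hy; rw [Function.iterate_succ_apply']; exact hW _ (IH y hy)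
  have hexj0 : ∃ j0, x j0 ≠ 0 := by
    by_contra h
    push_neg at h
    exact hx0 (funext fun i => h i)
  obtain ⟨j0, hj0⟩ := hexj0
  set y := (Dphi φ d n 1)^[d] x with hy_def
  have hy : ∀ j, y j = HahnSeries.single ((n : ℤ) * (b : ℤ) ^ (j : ℕ)) 1 * (⇑φ)^[d] (x j) :=
    fun j => dphi_iter_d σ φ b hφ1 hφ2 d n hd x j
  have hyj0 : y j0 ≠ 0 := by
    rw [hy j0]
    exact mul_ne_zero (HahnSeries.single_ne_zero one_ne_zero)
      (iter_phi_ne_and_order σ φ b hb hφ1 hφ2 d _ hj0).1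
  set lam := y j0 * (x j0)⁻¹ with hlam_def
  have hlam : lam ≠ 0 := mul_ne_zero hyj0 (inv_ne_zero hj0)
  set z := y - lam • x with hz_def
  have hzW : z ∈ W := W.sub_mem (hWiter d x hxW) (W.smul_mem lam hxW)
  have hzapp : ∀ j, z j = y j - lam * x j := fun j => rfl
  have hzj0 : z j0 = 0 := by
    rw [hzapp, hlam_def, mul_assoc, inv_mul_cancel₀ hj0, mul_one, sub_self]
  have hzsupp : ∀ j, x j = 0 → z j = 0 := by
    intro j hxj
    rw [hzapp, hy j, hxj, iter_phi_zero φ d, mul_zero, mul_zero, sub_zero]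
  have hz0 : z = 0 := by
    by_contra hz0
    have h1 := hmin z hzW hz0
    have h2 : (Finset.univ.filter (fun i => z i ≠ 0)).card
        < (Finset.univ.filter (fun i => x i ≠ 0)).card := by
      apply Finset.card_lt_card
      constructor
      · intro i hi
        simp only [Finset.mem_filter, Finset.mem_univ, true_and] at hi ⊢
        intro hxi
        exact hi (hzsupp i hxi)
      · intro hsub
        have := hsub (Finset.mem_filter.mpr ⟨Finset.mem_univ j0, hj0⟩)
        simp only [Finset.mem_filter] at this
        exact this.2 hzj0
    omega
  have heq : ∀ j, y j = lam * x j := by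
    intro j
    have h := congrFun hz0 j
    rw [hzapp j] at h
    simp only [Pi.zero_apply] at h
    exact sub_eq_zero.mp h
  have hkey : ∀ j : Fin d, x j ≠ 0 → j = j0 := by
    intro j hj
    by_contra hne
    have E : ∀ i : Fin d, x i ≠ 0 →
        (n : ℤ) * (b : ℤ) ^ (i : ℕ) + (b : ℤ) ^ d * (x i).order
          = lam.order + (x i).order := by
      intro i hi
      have h1 : HahnSeries.single ((n : ℤ) * (b : ℤ) ^ (i : ℕ)) 1 * (⇑φ)^[d] (x i)
          = lam * x i := by
        rw [← hy i]; exact heq i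
      have h2 := congrArg HahnSeries.order h1
      rw [HahnSeries.order_mul (HahnSeries.single_ne_zero one_ne_zero)
            (iter_phi_ne_and_order σ φ b hb hφ1 hφ2 d _ hi).1,
          HahnSeries.order_single one_ne_zero,
          (iter_phi_ne_and_order σ φ b hb hφ1 hφ2 d _ hi).2,
          HahnSeries.order_mul hlam hi] at h2
      exact h2
    have E1 := E j hj
    have E2 := E j0 hj0
    have hdvd : ((b : ℤ) ^ d - 1) ∣ (n : ℤ) * ((b : ℤ) ^ (j0 : ℕ) - (b : ℤ) ^ (j : ℕ)) :=
      ⟨(x j).order - (x j0).order, by linear_combination E2 - E1⟩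
    have hvne : (j : ℕ) ≠ (j0 : ℕ) := fun h => hne (Fin.ext h)
    rcases Nat.lt_or_ge (j0 : ℕ) (j : ℕ) with hlt | hge
    · refine harith (j0 : ℕ) (j : ℕ) hlt j.isLt ?_
      have hneg : (n : ℤ) * ((b : ℤ) ^ (j : ℕ) - (b : ℤ) ^ (j0 : ℕ))
          = -((n : ℤ) * ((b : ℤ) ^ (j0 : ℕ) - (b : ℤ) ^ (j : ℕ))) := by ring
      rw [hneg]
      exact dvd_neg.mpr hdvd
    · refine harith (j : ℕ) (j0 : ℕ) (by omega) j0.isLt ?_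
      exact hdvd
  have hxs : x = fun j => if j = j0 then x j0 else 0 := by
    funext j
    by_cases h : j = j0
    · rw [if_pos h, h]
    · rw [if_neg h]
      by_contra hxj
      exact h (hkey j hxj)
  have hQstep : ∀ i : Fin d, (∃ c, c ≠ 0 ∧ (fun j => if j = i then c else 0) ∈ W) →
      ∃ c, c ≠ 0 ∧
        (fun j => if j = (⟨((i : ℕ) + 1) % d, Nat.mod_lt _ hd⟩ : Fin d) then c else 0) ∈ W := by
    rintro i ⟨c, hc, hcW⟩
    refine ⟨if (i : ℕ) + 1 = d then HahnSeries.single (n : ℤ) 1 * φ c else φ c, ?_, ?_⟩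
    · have hφc : φ c ≠ 0 := by
        intro h
        exact hc (φ.injective (h.trans (map_zero φ).symm))
      split_ifs
      · exact mul_ne_zero (HahnSeries.single_ne_zero one_ne_zero) hφc
      · exact hφc
    · have := hW _ hcW
      rwa [dphi_single_vec φ d n hd i c] at this
  have hQt : ∀ t : ℕ, ∃ c, c ≠ 0 ∧
      (fun j => if j = (⟨((j0 : ℕ) + t) % d, Nat.mod_lt _ hd⟩ : Fin d) then c else 0) ∈ W := by
    intro t
    induction t with
    | zero =>
      have hj0eq : (⟨((j0 : ℕ) + 0) % d, Nat.mod_lt _ hd⟩ : Fin d) = j0 :=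
        Fin.ext (by simp only [Fin.val_mk, Nat.add_zero]; exact Nat.mod_eq_of_lt j0.isLt)
      rw [hj0eq]
      exact ⟨x j0, hj0, by rw [← hxs]; exact hxW⟩
    | succ t IH =>
      have h := hQstep _ IH
      simp only [Fin.val_mk] at h
      have hidx : (⟨((((j0 : ℕ) + t) % d : ℕ) + 1) % d, Nat.mod_lt _ hd⟩ : Fin d)
          = (⟨((j0 : ℕ) + (t + 1)) % d, Nat.mod_lt _ hd⟩ : Fin d) :=
        Fin.ext (by
          simp only [Fin.val_mk]
          rw [Nat.mod_add_mod]
          rfl)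
      rwa [hidx] at h
  have hQ : ∀ i : Fin d, ∃ c, c ≠ 0 ∧ (fun j => if j = i then c else 0) ∈ W := by
    intro i
    have h := hQt ((i : ℕ) + d - (j0 : ℕ))
    have hidx : (⟨((j0 : ℕ) + ((i : ℕ) + d - (j0 : ℕ))) % d, Nat.mod_lt _ hd⟩ : Fin d) = i := by
      apply Fin.ext
      simp only [Fin.val_mk]
      rw [show (j0 : ℕ) + ((i : ℕ) + d - (j0 : ℕ)) = (i : ℕ) + d by omega,
        Nat.add_mod_right, Nat.mod_eq_of_lt i.isLt]
    rwa [hidx] at h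
  have hbasis : ∀ i : Fin d,
      (fun j => if j = i then (1 : LaurentSeries k) else 0) ∈ W := by
    intro i
    obtain ⟨c, hc, hcW⟩ := hQ i
    have hmem := W.smul_mem c⁻¹ hcW
    have heq2 : (c⁻¹ • fun j => if j = i then c else 0)
        = fun j => if j = i then (1 : LaurentSeries k) else 0 := by
      funext j
      by_cases h : j = i
      · simp [h, inv_mul_cancel₀ hc]
      · simp [h]
    rwa [heq2] at hmem
  rw [eq_top_iff]
  intro v _
  rw [pi_eq_sum_univ v]
  apply Submodule.sum_mem
  intro i _
  apply W.smul_mem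
  have hswap : (fun j => if i = j then (1 : LaurentSeries k) else 0)
      = (fun j => if j = i then (1 : LaurentSeries k) else 0) := by
    funext j
    simp [eq_comm]
  rw [hswap]
  exact hbasis i

/-- Simplicity of `D(r)`.  For `r ∈ ℤ_{(b)}` with length `ℓ(r)` (the order of `b`
modulo the reduced denominator of `r`) and `n ∈ N(r)` (that is, `n/(b^{ℓ(r)} - 1)`
represents `r` modulo `ℤ`), every nonzero φ-stable subspace of
`D(r) = D(ℓ(r), n)` is the whole space. -/
theorem stmt15 (p : ℕ) [Fact p.Prime] (b : ℕ) (hb : 1 < b)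
    (σ : AlgebraicClosure (ZMod p) ≃+* AlgebraicClosure (ZMod p))
    (φ : LaurentSeries (AlgebraicClosure (ZMod p)) →+*
      LaurentSeries (AlgebraicClosure (ZMod p)))
    (hφ1 : ∀ (f : LaurentSeries (AlgebraicClosure (ZMod p))) (m : ℤ),
      (φ f).coeff ((b : ℤ) * m) = σ (f.coeff m))
    (hφ2 : ∀ (f : LaurentSeries (AlgebraicClosure (ZMod p))) (m : ℤ),
      ¬ ((b : ℤ) ∣ m) → (φ f).coeff m = 0)
    (r : ℚ) (hden : r.den.Coprime b) (n : ℕ)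
    (hn : ∃ m : ℤ,
      (n : ℚ) / ((b : ℚ) ^ (orderOf (b : ZMod r.den)) - 1) - r = (m : ℚ)) :
    ∀ W : Submodule (LaurentSeries (AlgebraicClosure (ZMod p)))
        (Fin (orderOf (b : ZMod r.den)) → LaurentSeries (AlgebraicClosure (ZMod p))),
      (∀ x ∈ W, Dphi φ (orderOf (b : ZMod r.den)) n 1 x ∈ W) →
      W = ⊥ ∨ W = ⊤ := by
  intro W hW
  exact simple_aux σ φ b hb hφ1 hφ2 (orderOf (b : ZMod r.den)) n
    (fun i j hij hjd => arith b hb r hden n hn i j hij hjd) W hW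
end

section
/- For a simple ťtale ŌÜ-module D over K = k((u)) whose matrix G of ŌÜ (in a suitable basis) lies in M_d(F_q[[u]]), let M be the F_q[[u]]-span of the basis and define x_0 = e_1, n_i minimal with ŌÜ(x_i) ‚ąą u^{n_i} M, x_{i+1} = u^{‚ąín_i} ŌÜ(x_i). Then n_i ‚ȧ ő≥ for all i, where ő≥ = v_u(det G), and for any c > ő≥/(b‚ąí1) there exist i < j with x_i ‚Č° x_j (mod u^c M); consequently ŌÜ^{j‚ąíi}(x_i) ‚Č° u^n x_i (mod u^{n+c} M) with n = ő£_{s=i}^{j‚ąí1} b^{j‚ąí1‚ąís} n_s ‚ȧ ő≥(b^{j‚ąíi}‚ąí1)/(b‚ąí1) < c(b^{j‚ąíi}‚ąí1). -/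
/-- Combinatorial core of the eigenvector theorem.  Over a finite field `F_q`, let
`M = F_q[[u]]^d` with semilinear operator `φ_M(x) = G ⬝ (φ ∘ x)`, where
`γ = v_u(det G)`.  Define `x_0 = e_1`, `n_i` the largest integer with
`φ_M(x_i) ∈ u^{n_i} M` and `x_{i+1} = u^{-n_i} φ_M(x_i)`.  Then `n_i ≤ γ` for all
`i`, and for every `c > γ/(b-1)` there are `i < j` with `x_i ≡ x_j (mod u^c M)`,
whence `φ_M^{j-i}(x_i) ≡ uⁿ x_i (mod u^{n+c} M)` with
`n = Σ_{s=i}^{j-1} b^{j-1-s} n_s ≤ γ (b^{j-i}-1)/(b-1) < c (b^{j-i}-1)`. -/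
theorem stmt19 (Fq : Type*) [Field Fq] [Fintype Fq]
    (σ : Fq ≃+* Fq) (b : ℕ) (hb : 1 < b)
    (φ : PowerSeries Fq →+* PowerSeries Fq)
    (hφ1 : ∀ (f : PowerSeries Fq) (m : ℕ),
      PowerSeries.coeff (b * m) (φ f) = σ (PowerSeries.coeff m f))
    (hφ2 : ∀ (f : PowerSeries Fq) (m : ℕ), ¬ (b ∣ m) →
      PowerSeries.coeff m (φ f) = 0)
    (d : ℕ) (hd : 0 < d) (G : Matrix (Fin d) (Fin d) (PowerSeries Fq))
    (γ : ℕ) (hγ : G.det.order = (γ : ℕ∞))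
    (x : ℕ → (Fin d → PowerSeries Fq)) (nseq : ℕ → ℕ)
    (hx0 : x 0 = Pi.single (⟨0, hd⟩ : Fin d) 1)
    (hdiv : ∀ i j, (PowerSeries.X : PowerSeries Fq) ^ (nseq i) ∣
      G.mulVec (fun l => φ (x i l)) j)
    (hmax : ∀ i, ¬ ∀ j, (PowerSeries.X : PowerSeries Fq) ^ (nseq i + 1) ∣
      G.mulVec (fun l => φ (x i l)) j)
    (hrec : ∀ i j, (PowerSeries.X : PowerSeries Fq) ^ (nseq i) * x (i + 1) j =
      G.mulVec (fun l => φ (x i l)) j) :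
    (∀ i, nseq i ≤ γ) ∧
    ∀ c : ℕ, c * (b - 1) > γ →
      ∃ i j : ℕ, i < j ∧
        (∀ l, (PowerSeries.X : PowerSeries Fq) ^ c ∣ (x i l - x j l)) ∧
        (∀ l, (PowerSeries.X : PowerSeries Fq) ^
            ((∑ s ∈ Finset.Ico i j, b ^ (j - 1 - s) * nseq s) + c) ∣
          ((fun y : Fin d → PowerSeries Fq =>
              G.mulVec (fun l' => φ (y l')))^[j - i] (x i) l -
            PowerSeries.X ^ (∑ s ∈ Finset.Ico i j, b ^ (j - 1 - s) * nseq s) *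
              x i l)) ∧
        (∑ s ∈ Finset.Ico i j, b ^ (j - 1 - s) * nseq s) * (b - 1) ≤
          γ * (b ^ (j - i) - 1) ∧
        (∑ s ∈ Finset.Ico i j, b ^ (j - 1 - s) * nseq s) <
          c * (b ^ (j - i) - 1) := by
  classical
  -- φ sends X to X ^ b
  have hφX : φ PowerSeries.X = PowerSeries.X ^ b := by
    ext m
    rw [PowerSeries.coeff_X_pow]
    by_cases hdvd : b ∣ m
    · obtain ⟨m', rfl⟩ := hdvd
      rw [hφ1, PowerSeries.coeff_X]
      by_cases h1 : m' = 1
      · subst h1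
        simp
      · have hne : b * m' ≠ b := by
          intro h
          exact h1 (by nlinarith [Nat.eq_of_mul_eq_mul_left (by omega : 0 < b) (by omega : b * m' = b * 1)])
        simp [h1, hne]
    · rw [hφ2 _ _ hdvd]
      have : m ≠ b := fun h => hdvd (h ▸ dvd_refl b)
      simp [this]
  -- every x i has a coordinate with nonzero constant coefficient
  have hconst : ∀ i, ∃ l, PowerSeries.constantCoeff (x i l) ≠ 0 := by
    intro i
    rcases i with _ | i
    · refine ⟨⟨0, hd⟩, ?_⟩
      rw [hx0]
      simp
    · obtain ⟨l, hl⟩ := not_forall.mp (hmax i)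
      refine ⟨l, fun h0 => hl ?_⟩
      rw [← hrec i l, pow_succ]
      exact mul_dvd_mul_left _ (PowerSeries.X_dvd_iff.mpr h0)
  -- part 1 : nseq i ≤ γ
  have part1 : ∀ i, nseq i ≤ γ := by
    intro i
    obtain ⟨l, hl⟩ := hconst i
    have hflconst : PowerSeries.constantCoeff (φ (x i l)) ≠ 0 := by
      rw [← PowerSeries.coeff_zero_eq_constantCoeff] at hl ⊢
      have h0 := hφ1 (x i l) 0
      rw [Nat.mul_zero] at h0
      rw [h0]
      intro h
      exact hl ((RingEquiv.map_eq_zero_iff σ).mp h)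
    have e1 : (G.adjugate * G).mulVec (fun l' => φ (x i l')) =
        G.det • (fun l' => φ (x i l')) := by
      rw [Matrix.adjugate_mul, Matrix.smul_mulVec, Matrix.one_mulVec]
    have e2 : G.det * φ (x i l) =
        ∑ l', G.adjugate l l' * (G.mulVec (fun l'' => φ (x i l'')) l') := by
      calc G.det * φ (x i l) = (G.det • fun l' => φ (x i l')) l := rfl
        _ = (G.adjugate * G).mulVec (fun l' => φ (x i l')) l := by rw [e1]
        _ = G.adjugate.mulVec (G.mulVec fun l'' => φ (x i l'')) l := by
              rw [← Matrix.mulVec_mulVec]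
        _ = ∑ l', G.adjugate l l' * (G.mulVec (fun l'' => φ (x i l'')) l') := rfl
    have hdvd2 : (PowerSeries.X : PowerSeries Fq) ^ (nseq i) ∣ G.det * φ (x i l) := by
      rw [e2]
      exact Finset.dvd_sum fun l' _ => Dvd.dvd.mul_left (hdiv i l') _
    have hγ' : G.det.order = (γ : ℕ∞) := by
      exact hγ
    have horderφ : (φ (x i l)).order = ((0 : ℕ) : ℕ∞) := by
      refine PowerSeries.order_eq_nat.mpr ⟨?_, fun m hm => absurd hm (Nat.not_lt_zero m)⟩
      rwa [PowerSeries.coeff_zero_eq_constantCoeff]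
    have horder : (G.det * φ (x i l)).order = (γ : ℕ∞) := by
      rw [PowerSeries.order_mul, hγ', horderφ]
      simp
    obtain ⟨hne, -⟩ := PowerSeries.order_eq_nat.mp horder
    by_contra hlt
    exact hne (PowerSeries.X_pow_dvd_iff.mp hdvd2 γ (by omega))
  refine ⟨part1, ?_⟩
  intro c hc
  -- the iterate formula
  have hiter : ∀ i k, (fun y : Fin d → PowerSeries Fq =>
      G.mulVec (fun l' => φ (y l')))^[k] (x i)
      = fun l => (PowerSeries.X : PowerSeries Fq) ^
          (∑ s ∈ Finset.Ico i (i + k), b ^ (i + k - 1 - s) * nseq s) * x (i + k) l := by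
    intro i k
    induction k with
    | zero => simp
    | succ k ih =>
      rw [Function.iterate_succ_apply', ih]
      funext l
      have hsum : ∑ s ∈ Finset.Ico i (i + (k + 1)), b ^ (i + (k + 1) - 1 - s) * nseq s
          = (∑ s ∈ Finset.Ico i (i + k), b ^ (i + k - 1 - s) * nseq s) * b + nseq (i + k) := by
        rw [show i + (k + 1) = (i + k) + 1 from rfl,
          Finset.sum_Ico_succ_top (Nat.le_add_right i k), Finset.sum_mul]
        congr 1
        · apply Finset.sum_congr rfl
          intro s hs
          rw [Finset.mem_Ico] at hs
          rw [mul_assoc, mul_comm (nseq s) b, ← mul_assoc, ← pow_succ]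
          congr 2
          omega
        · have h0 : (i + k) + 1 - 1 - (i + k) = 0 := by omega
          rw [h0, pow_zero, one_mul]
      set N := ∑ s ∈ Finset.Ico i (i + k), b ^ (i + k - 1 - s) * nseq s with hN
      show G.mulVec (fun l' => φ ((PowerSeries.X : PowerSeries Fq) ^ N * x (i + k) l')) l = _
      have hphi : (fun l' => φ ((PowerSeries.X : PowerSeries Fq) ^ N * x (i + k) l'))
          = ((PowerSeries.X : PowerSeries Fq) ^ (N * b)) • (fun l' => φ (x (i + k) l')) := by
        funext l'
        rw [map_mul, map_pow, hφX, ← pow_mul, mul_comm b N]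
        rfl
      rw [hphi, Matrix.mulVec_smul]
      show (PowerSeries.X : PowerSeries Fq) ^ (N * b) *
          (G.mulVec (fun l' => φ (x (i + k) l')) l) = _
      rw [← hrec (i + k) l, hsum, ← mul_assoc, ← pow_add]
      rfl
  -- geometric sum in ℕ
  have hgeo : ∀ m : ℕ, (∑ t ∈ Finset.range m, b ^ t) * (b - 1) = b ^ m - 1 := by
    intro m
    induction m with
    | zero => simp
    | succ m ih =>
      rw [Finset.sum_range_succ, add_mul, ih]
      have h1 : 1 ≤ b ^ m := Nat.one_le_pow _ _ (by omega)
      have h2 : b ^ m * (b - 1) + b ^ m = b ^ (m + 1) := by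
        calc b ^ m * (b - 1) + b ^ m = b ^ m * ((b - 1) + 1) := (Nat.mul_succ _ _).symm
          _ = b ^ m * b := by rw [show b - 1 + 1 = b by omega]
          _ = b ^ (m + 1) := (pow_succ b m).symm
      omega
  -- pigeonhole
  obtain ⟨i0, j0, hne, heq⟩ := Finite.exists_ne_map_eq_of_infinite
    (fun i => fun (l : Fin d) (m : Fin c) => PowerSeries.coeff m (x i l))
  have hcongr : ∀ i j : ℕ, (fun (l : Fin d) (m : Fin c) => PowerSeries.coeff m (x i l))
      = (fun (l : Fin d) (m : Fin c) => PowerSeries.coeff m (x j l)) →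
      ∀ l, (PowerSeries.X : PowerSeries Fq) ^ c ∣ (x i l - x j l) := by
    intro i j h l
    rw [PowerSeries.X_pow_dvd_iff]
    intro m hm
    rw [map_sub]
    exact sub_eq_zero_of_eq (congrFun (congrFun h l) ⟨m, hm⟩)
  have final : ∀ i j : ℕ, i < j →
      (∀ l, (PowerSeries.X : PowerSeries Fq) ^ c ∣ (x i l - x j l)) →
      (∀ l, (PowerSeries.X : PowerSeries Fq) ^
            ((∑ s ∈ Finset.Ico i j, b ^ (j - 1 - s) * nseq s) + c) ∣
          ((fun y : Fin d → PowerSeries Fq =>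
              G.mulVec (fun l' => φ (y l')))^[j - i] (x i) l -
            PowerSeries.X ^ (∑ s ∈ Finset.Ico i j, b ^ (j - 1 - s) * nseq s) *
              x i l)) ∧
        (∑ s ∈ Finset.Ico i j, b ^ (j - 1 - s) * nseq s) * (b - 1) ≤
          γ * (b ^ (j - i) - 1) ∧
        (∑ s ∈ Finset.Ico i j, b ^ (j - 1 - s) * nseq s) <
          c * (b ^ (j - i) - 1) := by
    intro i j hij hXc
    set k := j - i with hk
    have hk' : i + k = j := by omega
    set n := ∑ s ∈ Finset.Ico i j, b ^ (j - 1 - s) * nseq s with hn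
    have hiter' : (fun y : Fin d → PowerSeries Fq =>
        G.mulVec (fun l' => φ (y l')))^[k] (x i)
        = fun l => (PowerSeries.X : PowerSeries Fq) ^ n * x j l := by
      rw [hiter i k, hk']
    have hsumpow : ∑ s ∈ Finset.Ico i j, b ^ (j - 1 - s) = ∑ t ∈ Finset.range k, b ^ t := by
      calc ∑ s ∈ Finset.Ico i j, b ^ (j - 1 - s)
          = ∑ t ∈ Finset.range k, b ^ (k - 1 - t) := by
            rw [Finset.sum_Ico_eq_sum_range]
            exact Finset.sum_congr rfl (fun t _ => by congr 1; omega)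
        _ = ∑ t ∈ Finset.range k, b ^ t := Finset.sum_range_reflect (fun t => b ^ t) k
    have bound1 : n * (b - 1) ≤ γ * (b ^ k - 1) := by
      have h1 : n ≤ γ * ∑ s ∈ Finset.Ico i j, b ^ (j - 1 - s) := by
        rw [Finset.mul_sum, hn]
        apply Finset.sum_le_sum
        intro s _
        calc b ^ (j - 1 - s) * nseq s ≤ b ^ (j - 1 - s) * γ :=
              Nat.mul_le_mul_left _ (part1 s)
          _ = γ * b ^ (j - 1 - s) := mul_comm _ _
      calc n * (b - 1) ≤ (γ * ∑ s ∈ Finset.Ico i j, b ^ (j - 1 - s)) * (b - 1) :=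
            Nat.mul_le_mul_right _ h1
        _ = γ * (b ^ k - 1) := by rw [mul_assoc, hsumpow, hgeo k]
    have hbk : b ≤ b ^ k := by
      calc b = b ^ 1 := (pow_one b).symm
        _ ≤ b ^ k := Nat.pow_le_pow_right (by omega) (by omega)
    have bound2 : n < c * (b ^ k - 1) := by
      have h2 : γ * (b ^ k - 1) < (c * (b - 1)) * (b ^ k - 1) := by
        apply Nat.mul_lt_mul_of_lt_of_le hc (le_refl _)
        omega
      have h3 : n * (b - 1) < c * (b ^ k - 1) * (b - 1) := by
        calc n * (b - 1) ≤ γ * (b ^ k - 1) := bound1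
          _ < (c * (b - 1)) * (b ^ k - 1) := h2
          _ = c * (b ^ k - 1) * (b - 1) := by ring
      exact Nat.lt_of_mul_lt_mul_right h3
    refine ⟨?_, bound1, bound2⟩
    intro l
    rw [hiter']
    have : (PowerSeries.X : PowerSeries Fq) ^ n * x j l - PowerSeries.X ^ n * x i l
        = PowerSeries.X ^ n * (x j l - x i l) := by ring
    rw [this, pow_add]
    apply mul_dvd_mul_left
    rw [show x j l - x i l = -(x i l - x j l) by ring]
    exact dvd_neg.mpr (hXc l)
  rcases hne.lt_or_gt with hlt | hlt
  · exact ⟨i0, j0, hlt, hcongr i0 j0 heq, final i0 j0 hlt (hcongr i0 j0 heq)⟩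
  · exact ⟨j0, i0, hlt, hcongr j0 i0 heq.symm, final j0 i0 hlt (hcongr j0 i0 heq.symm)⟩
end
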